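/- arXiv:2511.13870 — 9 statements merged into one kernel-verified Lean document; each statement's English description precedes it below -/
import Mathlib

section
/- Consider the closed-loop stochastic recursion x(k+1) = (A + B K C(k)) x(k) with deterministic initial condition x(0) = x₀ ∈ ℝⁿ, where C(k) = Diag(c₁(k)/p₁, …, cₙ(k)/pₙ) and the family (cᵢ(k))_{k∈ℕ, 1≤i≤n} consists of mutually independent Bernoulli random variables with parameters pᵢ ∈ (0,1]. If every (complex) eigenvalue of A + B K has modulus strictly less than 1, then the expected state converges to zero: E[x(k)] → 0 as k → ∞, for every initial condition x₀ ∈ ℝⁿ. -/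
open MeasureTheory ProbabilityTheory Matrix Filter
open scoped ENNReal NNReal
section Spectral

attribute [local instance] Matrix.linftyOpNormedAddCommGroup Matrix.linftyOpNormedRing
  Matrix.linftyOpNormedAlgebra

lemma entry_norm_le_linfty {n : ℕ} (N : Matrix (Fin n) (Fin n) ℂ) (i j : Fin n) :
    ‖N i j‖ ≤ ‖N‖ := by
  have h1 : ‖N i j‖₊ ≤ ∑ j', ‖N i j'‖₊ :=
    Finset.single_le_sum (f := fun j' => ‖N i j'‖₊) (fun _ _ => zero_le) (Finset.mem_univ j)
  have h2 : (∑ j', ‖N i j'‖₊) ≤ ‖N‖₊ := by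
    rw [Matrix.linfty_opNNNorm_def]
    exact Finset.le_sup (f := fun i => ∑ j', ‖N i j'‖₊) (Finset.mem_univ i)
  exact_mod_cast h1.trans h2

lemma pow_entry_tendsto_zero {n : ℕ} (M : Matrix (Fin n) (Fin n) ℝ)
    (hspec : ∀ z ∈ spectrum ℂ (M.map (Complex.ofReal)), ‖z‖ < 1) (i j : Fin n) :
    Tendsto (fun k => (M ^ k) i j) atTop (nhds 0) := by
  haveI : Nonempty (Fin n) := ⟨i⟩
  haveI : CompleteSpace (Matrix (Fin n) (Fin n) ℂ) := FiniteDimensional.complete ℂ _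
  set a := M.map (Complex.ofReal) with ha
  have hsne : (spectrum ℂ a).Nonempty := spectrum.nonempty a
  have hcpt : IsCompact (spectrum ℂ a) := spectrum.isCompact a
  obtain ⟨z₀, hz₀, hmax⟩ := hcpt.exists_isMaxOn hsne continuous_norm.continuousOn
  have hρ : spectralRadius ℂ a < 1 := by
    have h1 : spectralRadius ℂ a ≤ (‖z₀‖₊ : ℝ≥0∞) :=
      iSup₂_le fun z hz => by exact_mod_cast hmax hz
    refine h1.trans_lt ?_
    have := hspec z₀ hz₀
    exact_mod_cast this
  obtain ⟨r, hρr, hr1⟩ := exists_between hρ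
  have hrtop : r ≠ ⊤ := (hr1.trans_le le_top).ne
  lift r to ℝ≥0 using hrtop
  have hgel := spectrum.pow_nnnorm_pow_one_div_tendsto_nhds_spectralRadius a
  have hlt : ∀ᶠ k : ℕ in atTop, (‖a ^ k‖₊ : ℝ≥0∞) ^ (1 / (k : ℝ)) < (r : ℝ≥0∞) :=
    hgel.eventually_lt_const hρr
  have hbd : ∀ᶠ k in atTop, ‖a ^ k‖ ≤ (r : ℝ) ^ k := by
    filter_upwards [hlt, eventually_ge_atTop 1] with k hk hk1
    have hk0 : (k : ℝ) ≠ 0 := Nat.cast_ne_zero.mpr (by omega)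
    have h1 : ((‖a ^ k‖₊ : ℝ≥0∞) ^ (1 / (k : ℝ))) ^ (k : ℝ) ≤ (r : ℝ≥0∞) ^ (k : ℝ) :=
      ENNReal.rpow_le_rpow hk.le (Nat.cast_nonneg k)
    rw [← ENNReal.rpow_mul, one_div, inv_mul_cancel₀ hk0, ENNReal.rpow_one,
      ENNReal.rpow_natCast, ← ENNReal.coe_pow, ENNReal.coe_le_coe] at h1
    calc ‖a ^ k‖ = ((‖a ^ k‖₊ : ℝ≥0) : ℝ) := rfl
    _ ≤ ((r ^ k : ℝ≥0) : ℝ) := by exact_mod_cast h1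
    _ = (r : ℝ) ^ k := by push_cast; ring
  have hr1' : (r : ℝ) < 1 := by exact_mod_cast hr1
  have hgeo : Tendsto (fun k : ℕ => (r : ℝ) ^ k) atTop (nhds 0) :=
    tendsto_pow_atTop_nhds_zero_of_lt_one r.coe_nonneg hr1'
  have hnorm0 : Tendsto (fun k => ‖a ^ k‖) atTop (nhds 0) :=
    squeeze_zero' (Eventually.of_forall fun k => norm_nonneg _) hbd hgeo
  have hmap : ∀ k, a ^ k = (M ^ k).map (Complex.ofReal) := by
    intro k
    have h2 : (Complex.ofRealHom.mapMatrix M) ^ k = Complex.ofRealHom.mapMatrix (M ^ k) :=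
      (map_pow Complex.ofRealHom.mapMatrix M k).symm
    simp only [RingHom.mapMatrix_apply] at h2
    exact h2
  refine squeeze_zero_norm (fun k => ?_) hnorm0
  rw [hmap k]
  simpa [Matrix.map_apply] using entry_norm_le_linfty ((M ^ k).map Complex.ofReal) i j

end Spectral

/-- Deterministic evolution functional: evolves `x₀` for `k` steps using the values
`v (l, i)` in place of the random variables `c l i`. -/
noncomputable def xiEvo {n : ℕ} (A N : Matrix (Fin n) (Fin n) ℝ) (p : Fin n → ℝ) (x₀ : Fin n → ℝ) :
    ℕ → ((ℕ × Fin n) → ℝ) → (Fin n → ℝ)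
  | 0, _ => x₀
  | (k + 1), v =>
      (A + N * Matrix.diagonal (fun i => v (k, i) / p i)).mulVec (xiEvo A N p x₀ k v)

lemma xiEvo_zero {n : ℕ} (A N : Matrix (Fin n) (Fin n) ℝ) (p : Fin n → ℝ) (x₀ : Fin n → ℝ)
    (v : (ℕ × Fin n) → ℝ) : xiEvo A N p x₀ 0 v = x₀ := rfl

lemma xiEvo_succ {n : ℕ} (A N : Matrix (Fin n) (Fin n) ℝ) (p : Fin n → ℝ) (x₀ : Fin n → ℝ)
    (k : ℕ) (v : (ℕ × Fin n) → ℝ) :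
    xiEvo A N p x₀ (k + 1) v
      = (A + N * Matrix.diagonal (fun i => v (k, i) / p i)).mulVec (xiEvo A N p x₀ k v) := rfl

lemma xiEvo_measurable {n : ℕ} (A N : Matrix (Fin n) (Fin n) ℝ) (p : Fin n → ℝ)
    (x₀ : Fin n → ℝ) (k : ℕ) : Measurable (xiEvo A N p x₀ k) := by
  induction k with
  | zero => exact measurable_const
  | succ k ih =>
    refine measurable_pi_lambda _ fun i => ?_
    have : (fun v => xiEvo A N p x₀ (k + 1) v i)
        = fun v => ∑ j, (A i j + N i j * (v (k, j) / p j)) * xiEvo A N p x₀ k v j := by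
      funext v
      simp [xiEvo_succ, Matrix.mulVec, dotProduct, Matrix.add_apply, Matrix.mul_diagonal]
    rw [this]
    refine Finset.measurable_sum _ fun j _ => ?_
    exact (measurable_const.add (((measurable_pi_apply (k, j)).div_const _).const_mul _)).mul
      ((measurable_pi_apply j).comp ih)

lemma xiEvo_congr {n : ℕ} (A N : Matrix (Fin n) (Fin n) ℝ) (p : Fin n → ℝ)
    (x₀ : Fin n → ℝ) (k : ℕ) (v w : (ℕ × Fin n) → ℝ)
    (h : ∀ l i, l < k → v (l, i) = w (l, i)) : xiEvo A N p x₀ k v = xiEvo A N p x₀ k w := by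
  induction k with
  | zero => rfl
  | succ k ih =>
    have h1 : xiEvo A N p x₀ k v = xiEvo A N p x₀ k w :=
      ih fun l i hl => h l i (hl.trans (Nat.lt_succ_self k))
    have h2 : (fun i => v (k, i) / p i) = fun i => w (k, i) / p i := by
      funext i; rw [h k i (Nat.lt_succ_self k)]
    simp only [xiEvo_succ, h1, h2]

/-- For the closed-loop stochastic recursion
`x(k+1) = (A + B K C(k)) x(k)` with `C(k) = Diag(c₁(k)/p₁, …, cₙ(k)/pₙ)` built from
mutually independent Bernoulli random variables with parameters `pᵢ ∈ (0,1]`,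
if every complex eigenvalue of `A + B K` has modulus strictly less than `1`, then the
expected state converges to zero, for every initial condition `x₀ ∈ ℝⁿ`. -/
theorem expected_state_tendsto_zero
    {n m : ℕ} (A : Matrix (Fin n) (Fin n) ℝ) (B : Matrix (Fin n) (Fin m) ℝ)
    (K : Matrix (Fin m) (Fin n) ℝ)
    {Ω : Type*} [MeasurableSpace Ω] (μ : Measure Ω) [IsProbabilityMeasure μ]
    (p : Fin n → ℝ) (hp : ∀ i, p i ∈ Set.Ioc (0 : ℝ) 1)
    (c : ℕ → Fin n → Ω → ℝ)
    (hmeas : ∀ k i, Measurable (c k i))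
    (h01 : ∀ k i ω, c k i ω = 0 ∨ c k i ω = 1)
    (hber : ∀ k i, μ {ω | c k i ω = 1} = ENNReal.ofReal (p i))
    (hindep : iIndepFun
      (fun (ki : ℕ × Fin n) ω => c ki.1 ki.2 ω) μ)
    (hspec : ∀ z ∈ spectrum ℂ ((A + B * K).map (Complex.ofReal)), ‖z‖ < 1)
    (x₀ : Fin n → ℝ) (x : ℕ → Ω → Fin n → ℝ)
    (hx0 : ∀ ω, x 0 ω = x₀)
    (hxrec : ∀ k ω, x (k + 1) ω =
      (A + B * K * Matrix.diagonal (fun i => c k i ω / p i)).mulVec (x k ω)) :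
    Tendsto (fun k => (fun i => ∫ ω, x k ω i ∂μ)) atTop (nhds 0) := by
  classical
  set N : Matrix (Fin n) (Fin n) ℝ := B * K with hN
  set M : Matrix (Fin n) (Fin n) ℝ := A + N with hM
  -- x is given by the deterministic functional applied to the random inputs
  have hx_eq : ∀ k ω, x k ω = xiEvo A N p x₀ k (fun q => c q.1 q.2 ω) := by
    intro k
    induction k with
    | zero => intro ω; rw [hx0, xiEvo_zero]
    | succ k ih => intro ω; rw [hxrec, xiEvo_succ, ih]
  -- measurability
  have hxm : ∀ k, Measurable (fun ω => x k ω) := by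
    intro k
    have : (fun ω => x k ω) = (xiEvo A N p x₀ k) ∘ (fun ω q => c q.1 q.2 ω) := by
      funext ω; exact hx_eq k ω
    rw [this]
    exact (xiEvo_measurable A N p x₀ k).comp
      (measurable_pi_lambda _ fun q => hmeas q.1 q.2)
  have hxmj : ∀ k j, Measurable (fun ω => x k ω j) := fun k j =>
    (measurable_pi_apply j).comp (hxm k)
  -- c is {0,1}-valued, hence bounded by 1
  have hcb : ∀ k j ω, |c k j ω| ≤ 1 := by
    intro k j ω; rcases h01 k j ω with h | h <;> rw [h] <;> norm_num
  -- boundedness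
  have hbd : ∀ k, ∃ C, 0 ≤ C ∧ ∀ ω j, |x k ω j| ≤ C := by
    intro k
    induction k with
    | zero =>
      exact ⟨‖x₀‖, norm_nonneg _, fun ω j => by
        rw [hx0]; exact (Real.norm_eq_abs _ ▸ norm_le_pi_norm x₀ j)⟩
    | succ k ih =>
      obtain ⟨C, hC0, hC⟩ := ih
      refine ⟨(∑ i, ∑ j, (|A i j| + |N i j| / p j)) * C,
        mul_nonneg (Finset.sum_nonneg fun i _ => Finset.sum_nonneg fun j _ =>
          add_nonneg (abs_nonneg _) (div_nonneg (abs_nonneg _) (hp j).1.le)) hC0,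
        fun ω i => ?_⟩
      have hrec : x (k + 1) ω i = ∑ j, (A i j + N i j * (c k j ω / p j)) * x k ω j := by
        rw [hxrec]
        simp [Matrix.mulVec, dotProduct, Matrix.add_apply, Matrix.mul_diagonal, hN]
      rw [hrec]
      calc |∑ j, (A i j + N i j * (c k j ω / p j)) * x k ω j|
          ≤ ∑ j, |(A i j + N i j * (c k j ω / p j)) * x k ω j| := Finset.abs_sum_le_sum_abs _ _
        _ ≤ ∑ j, (|A i j| + |N i j| / p j) * C := by
            refine Finset.sum_le_sum fun j _ => ?_
            rw [abs_mul]
            refine mul_le_mul ?_ (hC ω j) (abs_nonneg _)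
              (add_nonneg (abs_nonneg _) (div_nonneg (abs_nonneg _) (hp j).1.le))
            refine (abs_add_le _ _).trans ?_
            gcongr
            calc |N i j * (c k j ω / p j)| = |N i j| * (|c k j ω| / p j) := by
                  rw [abs_mul, abs_div, abs_of_pos (hp j).1]
              _ ≤ |N i j| * (1 / p j) := by
                  refine mul_le_mul_of_nonneg_left ?_ (abs_nonneg _)
                  exact (div_le_div_iff_of_pos_right (hp j).1).mpr (hcb k j ω)
              _ = |N i j| / p j := by ring
        _ = (∑ j, (|A i j| + |N i j| / p j)) * C := by rw [Finset.sum_mul]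
        _ ≤ (∑ i', ∑ j, (|A i' j| + |N i' j| / p j)) * C := by
            refine mul_le_mul_of_nonneg_right ?_ hC0
            exact Finset.single_le_sum (f := fun i' => ∑ j, (|A i' j| + |N i' j| / p j))
              (fun i' _ => Finset.sum_nonneg fun j _ =>
                add_nonneg (abs_nonneg _) (div_nonneg (abs_nonneg _) (hp j).1.le))
              (Finset.mem_univ i)
  -- integrability
  have hInt : ∀ k j, Integrable (fun ω => x k ω j) μ := by
    intro k j
    obtain ⟨C, _, hC⟩ := hbd k
    exact ⟨(hxmj k j).aestronglyMeasurable,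
      HasFiniteIntegral.of_bounded (ae_of_all μ fun ω => by
        rw [Real.norm_eq_abs]; exact hC ω j)⟩
  have hIntc : ∀ k l j, Integrable (fun ω => c k j ω * x l ω j) μ := by
    intro k l j
    obtain ⟨C, hC0, hC⟩ := hbd l
    refine ⟨((hmeas k j).mul (hxmj l j)).aestronglyMeasurable,
      HasFiniteIntegral.of_bounded (C := C) (ae_of_all μ fun ω => ?_)⟩
    rw [Real.norm_eq_abs, abs_mul]
    calc |c k j ω| * |x l ω j| ≤ 1 * C :=
          mul_le_mul (hcb k j ω) (hC ω j) (abs_nonneg _) zero_le_one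
      _ = C := one_mul _
  -- independence of x k · j and c k j
  have hIndepF : ∀ k j, IndepFun (c k j) (fun ω => x k ω j) μ := by
    intro k j
    set S : Finset (ℕ × Fin n) := Finset.range k ×ˢ Finset.univ with hS
    set T : Finset (ℕ × Fin n) := {(k, j)} with hT
    have hST : Disjoint S T := by
      rw [hT, Finset.disjoint_singleton_right, hS, Finset.mem_product]
      simp
    have hI := hindep.indepFun_finset S T hST (fun q => hmeas q.1 q.2)
    set φ : ((q : S) → ℝ) → ℝ := fun w =>
      xiEvo A N p x₀ k (fun q => if h : q ∈ S then w ⟨q, h⟩ else 0) j with hφdef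
    set ψ : ((q : T) → ℝ) → ℝ := fun w => w ⟨(k, j), Finset.mem_singleton_self _⟩ with hψdef
    have hφ : Measurable φ := by
      refine (measurable_pi_apply j).comp ((xiEvo_measurable A N p x₀ k).comp ?_)
      refine measurable_pi_lambda _ fun q => ?_
      by_cases h : q ∈ S
      · simpa [h] using measurable_pi_apply (⟨q, h⟩ : S)
      · simpa [h] using measurable_const
    have hψ : Measurable ψ := measurable_pi_apply _
    have hcomp := hI.comp hφ hψ
    have h1 : (fun ω => φ (fun q : S => c q.1.1 q.1.2 ω)) = fun ω => x k ω j := by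
      funext ω
      rw [hφdef]
      simp only []
      rw [hx_eq k ω]
      refine congrFun (xiEvo_congr A N p x₀ k _ _ fun l i hl => ?_) j
      have hmem : ((l, i) : ℕ × Fin n) ∈ S := by
        rw [hS, Finset.mem_product]; exact ⟨Finset.mem_range.2 hl, Finset.mem_univ _⟩
      simp [hmem]
    have h2 : (fun ω => ψ (fun q : T => c q.1.1 q.1.2 ω)) = c k j := by
      funext ω; rfl
    simp only [Function.comp_def] at hcomp
    rw [h1, h2] at hcomp
    exact hcomp.symm
  -- expectation of c
  have hEc : ∀ k j, ∫ ω, c k j ω ∂μ = p j := by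
    intro k j
    have hset : MeasurableSet {ω | c k j ω = 1} :=
      (hmeas k j) (measurableSet_singleton 1)
    have hind : (fun ω => c k j ω)
        = Set.indicator {ω | c k j ω = 1} (fun _ => (1 : ℝ)) := by
      funext ω
      rcases h01 k j ω with h | h
      · rw [h, Set.indicator_apply, if_neg]; simp [h]
      · rw [h, Set.indicator_apply, if_pos]; exact h
    rw [hind, integral_indicator_const _ hset, measureReal_def, hber k j, smul_eq_mul, mul_one,
      ENNReal.toReal_ofReal (hp j).1.le]
  -- expectation recursion
  have hE : ∀ k, (fun i => ∫ ω, x k ω i ∂μ) = (M ^ k).mulVec x₀ := by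
    intro k
    induction k with
    | zero =>
      funext i
      simp [hx0, pow_zero, Matrix.one_mulVec]
    | succ k ih =>
      funext i
      have hrec : ∀ ω, x (k + 1) ω i
          = ∑ j, (A i j * x k ω j + (N i j / p j) * (c k j ω * x k ω j)) := by
        intro ω
        rw [hxrec]
        simp only [Matrix.mulVec, dotProduct, Matrix.add_apply, Matrix.mul_diagonal]
        refine Finset.sum_congr rfl fun j _ => ?_
        ring
      have hintterm : ∀ j : Fin n, Integrable
          (fun ω => A i j * x k ω j + (N i j / p j) * (c k j ω * x k ω j)) μ :=
        fun j => ((hInt k j).const_mul _).add ((hIntc k k j).const_mul _)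
      calc ∫ ω, x (k + 1) ω i ∂μ
          = ∫ ω, ∑ j, (A i j * x k ω j + (N i j / p j) * (c k j ω * x k ω j)) ∂μ := by
            congr 1; funext ω; exact hrec ω
        _ = ∑ j, ∫ ω, (A i j * x k ω j + (N i j / p j) * (c k j ω * x k ω j)) ∂μ :=
            integral_finset_sum _ fun j _ => hintterm j
        _ = ∑ j, M i j * ((M ^ k).mulVec x₀ j) := by
            refine Finset.sum_congr rfl fun j _ => ?_
            have hcInt : Integrable (c k j) μ :=
              ⟨(hmeas k j).aestronglyMeasurable,
                HasFiniteIntegral.of_bounded (C := 1) (ae_of_all μ fun ω => by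
                  rw [Real.norm_eq_abs]; exact hcb k j ω)⟩
            have hmul : ∫ ω, c k j ω * x k ω j ∂μ
                = (∫ ω, c k j ω ∂μ) * ∫ ω, x k ω j ∂μ :=
              (hIndepF k j).integral_fun_mul_eq_mul_integral hcInt.1 (hInt k j).1
            rw [integral_add ((hInt k j).const_mul _) ((hIntc k k j).const_mul _),
              integral_const_mul, integral_const_mul, hmul, hEc k j]
            have hxj : ∫ ω, x k ω j ∂μ = (M ^ k).mulVec x₀ j := congrFun ih j
            rw [hxj]
            have hMij : M i j = A i j + N i j := by rw [hM, Matrix.add_apply]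
            rw [hMij]
            have hpne : p j ≠ 0 := (hp j).1.ne'
            field_simp
        _ = (M ^ (k + 1)).mulVec x₀ i := by
            rw [pow_succ', ← Matrix.mulVec_mulVec]
            simp [Matrix.mulVec, dotProduct]
  -- conclusion via the spectral result
  have hfinal : Tendsto (fun k => (M ^ k).mulVec x₀) atTop (nhds 0) := by
    rw [tendsto_pi_nhds]
    intro i
    have : ∀ k, (M ^ k).mulVec x₀ i = ∑ j, (M ^ k) i j * x₀ j := by
      intro k; simp [Matrix.mulVec, dotProduct]
    simp only [this, Pi.zero_apply]
    have hsum : Tendsto (fun k => ∑ j, (M ^ k) i j * x₀ j) atTop (nhds (∑ j : Fin n, 0)) := by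
      refine tendsto_finset_sum _ fun j _ => ?_
      have := (pow_entry_tendsto_zero M (by rw [hM, hN]; exact hspec) i j).mul_const (x₀ j)
      simpa using this
    simpa using hsum
  have : (fun k => (fun i => ∫ ω, x k ω i ∂μ)) = fun k => (M ^ k).mulVec x₀ := by
    funext k; exact hE k
  rw [this]
  exact hfinal
end

section
/- Let c₁, …, cₙ be mutually independent Bernoulli random variables, cᵢ taking value 1 with probability pᵢ ∈ (0,1] and 0 otherwise, and let C := Diag(c₁/p₁, …, cₙ/pₙ). Then for any matrix L ∈ ℝ^{n×n}, the expectation of Cᵀ Lᵀ L C equals Lᵀ L + Diag(s₁(1−p₁)/p₁, …, sₙ(1−pₙ)/pₙ), where sᵢ := Σ_{k=1}^{n} L_{k,i}² is the i-th diagonal entry of Lᵀ L. -/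
open MeasureTheory ProbabilityTheory Matrix

/-- If `c₁, …, cₙ` are mutually independent Bernoulli random variables
with parameters `pᵢ ∈ (0,1]` and `C := Diag(c₁/p₁, …, cₙ/pₙ)`, then for any `L ∈ ℝ^{n×n}`,
`E[Cᵀ Lᵀ L C] = Lᵀ L + Diag(s₁(1−p₁)/p₁, …, sₙ(1−pₙ)/pₙ)` where
`sᵢ := Σₖ L_{k,i}²` is the `i`-th diagonal entry of `Lᵀ L`. -/
theorem expectation_sparsifier_quadratic
    {n : ℕ} (L : Matrix (Fin n) (Fin n) ℝ)
    {Ω : Type*} [MeasurableSpace Ω] (μ : Measure Ω) [IsProbabilityMeasure μ]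
    (p : Fin n → ℝ) (hp : ∀ i, p i ∈ Set.Ioc (0 : ℝ) 1)
    (c : Fin n → Ω → ℝ)
    (hmeas : ∀ i, Measurable (c i))
    (h01 : ∀ i ω, c i ω = 0 ∨ c i ω = 1)
    (hber : ∀ i, μ {ω | c i ω = 1} = ENNReal.ofReal (p i))
    (hindep : iIndepFun c μ) :
    ∀ i j, (∫ ω, ((Matrix.diagonal (fun i => c i ω / p i))ᵀ * Lᵀ * L *
        Matrix.diagonal (fun i => c i ω / p i)) i j ∂μ) =
      (Lᵀ * L + Matrix.diagonal
        (fun i => (∑ k, (L k i) ^ 2) * (1 - p i) / p i)) i j := by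
  intro i j
  -- basic facts
  have hE : ∀ k, ∫ ω, c k ω ∂μ = p k := by
    intro k
    have hs : MeasurableSet {ω | c k ω = 1} :=
      (hmeas k) (measurableSet_singleton 1)
    have hind : c k = Set.indicator {ω | c k ω = 1} (fun _ => (1 : ℝ)) := by
      funext ω
      rcases h01 k ω with h | h
      · rw [h, Set.indicator_of_notMem]
        simp [Set.mem_setOf_eq, h]
      · rw [h, Set.indicator_of_mem]
        exact h
    rw [hind, integral_indicator hs]
    simp [Measure.real_def, hber k, ENNReal.toReal_ofReal (hp k).1.le]
  have hInt : ∀ k, Integrable (c k) μ := by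
    intro k
    refine Integrable.mono' (integrable_const 1) (hmeas k).aestronglyMeasurable ?_
    filter_upwards with ω
    rcases h01 k ω with h | h <;> simp [h]
  -- simplify the matrix entry
  have hentry : ∀ ω, ((Matrix.diagonal (fun i => c i ω / p i))ᵀ * Lᵀ * L *
      Matrix.diagonal (fun i => c i ω / p i)) i j =
      ((Lᵀ * L) i j / (p i * p j)) * (c i ω * c j ω) := by
    intro ω
    rw [Matrix.diagonal_transpose, Matrix.mul_assoc (diagonal _) Lᵀ L,
      Matrix.mul_diagonal, Matrix.diagonal_mul]
    field_simp
  simp only [hentry]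
  rw [integral_const_mul]
  by_cases hij : i = j
  · subst hij
    have hcc : ∀ ω, c i ω * c i ω = c i ω := by
      intro ω; rcases h01 i ω with h | h <;> simp [h]
    simp only [hcc, hE i]
    have hpi := (hp i).1
    have hLL : (Lᵀ * L) i i = ∑ k, (L k i) ^ 2 := by
      simp [Matrix.mul_apply, Matrix.transpose_apply, sq]
    rw [Matrix.add_apply, Matrix.diagonal_apply_eq, hLL]
    field_simp
    ring
  · have hindf : IndepFun (c i) (c j) μ := hindep.indepFun hij
    rw [show (fun ω => c i ω * c j ω) = c i * c j from rfl,
      hindf.integral_mul_eq_mul_integral (hmeas i).aestronglyMeasurable (hmeas j).aestronglyMeasurable,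
      hE i, hE j]
    have hpi := (hp i).1
    have hpj := (hp j).1
    rw [Matrix.add_apply, Matrix.diagonal_apply_ne _ hij]
    field_simp
    rw [add_zero]
end

section
/- Let p ∈ (0,1] and let c₁, …, cₙ be mutually independent Bernoulli random variables, each taking value 1 with probability p and 0 otherwise, and let C := Diag(c₁/p, …, cₙ/p). Let M := A + B K C (a random matrix), D := A + B K, and L := B K. Then E[Mᵀ M] = Dᵀ D + ((1−p)/p) · Diag(Lᵀ L), where Diag(Lᵀ L) denotes the diagonal matrix whose diagonal coincides with that of Lᵀ L. -/
open MeasureTheory ProbabilityTheory Matrix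

lemma entry_expand {n : ℕ} (A L : Matrix (Fin n) (Fin n) ℝ) (d : Fin n → ℝ) (i j : Fin n) :
    ((A + L * Matrix.diagonal d)ᵀ * (A + L * Matrix.diagonal d)) i j =
      (Aᵀ * A) i j + (Aᵀ * L) i j * d j + (Lᵀ * A) i j * d i + (Lᵀ * L) i j * (d i * d j) := by
  simp only [Matrix.mul_apply, Matrix.transpose_apply, Matrix.add_apply, Matrix.mul_diagonal,
    Finset.sum_mul]
  rw [← Finset.sum_add_distrib, ← Finset.sum_add_distrib, ← Finset.sum_add_distrib]
  refine Finset.sum_congr rfl fun k _ => ?_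
  simp only [Matrix.diagonal_apply, mul_ite, mul_zero, Finset.sum_ite_eq, Finset.sum_ite_eq',
    Finset.mem_univ, if_true]
  ring

/-- If `c₁, …, cₙ` are mutually independent Bernoulli(`p`) random
variables, `C := Diag(c₁/p, …, cₙ/p)`, `M := A + B K C`, `D := A + B K`, `L := B K`,
then `E[Mᵀ M] = Dᵀ D + ((1−p)/p) · Diag(Lᵀ L)`. -/
theorem expectation_closed_loop_gram
    {n m : ℕ} (A : Matrix (Fin n) (Fin n) ℝ) (B : Matrix (Fin n) (Fin m) ℝ)
    (K : Matrix (Fin m) (Fin n) ℝ)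
    {Ω : Type*} [MeasurableSpace Ω] (μ : Measure Ω) [IsProbabilityMeasure μ]
    (p : ℝ) (hp : p ∈ Set.Ioc (0 : ℝ) 1)
    (c : Fin n → Ω → ℝ)
    (hmeas : ∀ i, Measurable (c i))
    (h01 : ∀ i ω, c i ω = 0 ∨ c i ω = 1)
    (hber : ∀ i, μ {ω | c i ω = 1} = ENNReal.ofReal p)
    (hindep : iIndepFun c μ) :
    ∀ i j, (∫ ω, ((A + B * K * Matrix.diagonal (fun i => c i ω / p))ᵀ *
        (A + B * K * Matrix.diagonal (fun i => c i ω / p))) i j ∂μ) =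
      ((A + B * K)ᵀ * (A + B * K) + ((1 - p) / p) •
        Matrix.diagonal (fun i => ((B * K)ᵀ * (B * K)) i i)) i j := by
  obtain ⟨hp0, hp1⟩ := hp
  have hpne : p ≠ 0 := ne_of_gt hp0
  set L : Matrix (Fin n) (Fin n) ℝ := B * K with hLdef
  have hIntc : ∀ i, Integrable (c i) μ := fun i => by
    refine (integrable_const (1:ℝ)).mono' (hmeas i).aestronglyMeasurable ?_
    filter_upwards with ω
    rcases h01 i ω with h | h <;> simp [h]
  have hIntcc : ∀ i j, Integrable (fun ω => c i ω * c j ω) μ := fun i j => by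
    refine (integrable_const (1:ℝ)).mono' ((hmeas i).mul (hmeas j)).aestronglyMeasurable ?_
    filter_upwards with ω
    rcases h01 i ω with h | h <;> rcases h01 j ω with h' | h' <;> simp [h, h']
  have hEc : ∀ i, ∫ ω, c i ω ∂μ = p := by
    intro i
    have hset : MeasurableSet {ω | c i ω = 1} := (hmeas i) (measurableSet_singleton 1)
    have heq : (fun ω => c i ω) = Set.indicator {ω | c i ω = 1} (fun _ => (1:ℝ)) := by
      funext ω
      rcases h01 i ω with h | h <;> simp [h, Set.indicator_apply]
    rw [heq, integral_indicator_const (1:ℝ) hset, measureReal_def, hber i, smul_eq_mul, mul_one,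
      ENNReal.toReal_ofReal hp0.le]
  have hEcc : ∀ i j, ∫ ω, c i ω * c j ω ∂μ = if i = j then p else p * p := by
    intro i j
    by_cases hij : i = j
    · subst hij
      have h2 : (fun ω => c i ω * c i ω) = fun ω => c i ω := by
        funext ω; rcases h01 i ω with h | h <;> simp [h]
      rw [h2, hEc]; simp
    · rw [if_neg hij, show (fun ω => c i ω * c j ω) = c i * c j from rfl,
        (hindep.indepFun hij).integral_mul_eq_mul_integral (hIntc i).aestronglyMeasurable
        (hIntc j).aestronglyMeasurable, hEc, hEc]
  intro i j
  have hD : ((A + L)ᵀ * (A + L)) i j =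
      (Aᵀ * A) i j + (Aᵀ * L) i j + (Lᵀ * A) i j + (Lᵀ * L) i j := by
    rw [Matrix.transpose_add, Matrix.add_mul, Matrix.mul_add, Matrix.mul_add]
    simp [Matrix.add_apply]; ring
  have hInteg : (fun ω => ((A + L * Matrix.diagonal (fun i => c i ω / p))ᵀ *
      (A + L * Matrix.diagonal (fun i => c i ω / p))) i j)
      = fun ω => (Aᵀ * A) i j + (Aᵀ * L) i j / p * c j ω + (Lᵀ * A) i j / p * c i ω
        + (Lᵀ * L) i j / p ^ 2 * (c i ω * c j ω) := by
    funext ω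
    rw [entry_expand A L (fun i => c i ω / p) i j]
    field_simp
  have I1 : Integrable (fun ω => (Aᵀ * A) i j + (Aᵀ * L) i j / p * c j ω) μ := by
    exact (integrable_const _).add ((hIntc j).const_mul _)
  have I2 : Integrable (fun ω => (Aᵀ * A) i j + (Aᵀ * L) i j / p * c j ω
      + (Lᵀ * A) i j / p * c i ω) μ := by
    exact I1.add ((hIntc i).const_mul _)
  rw [hInteg, integral_add I2 ((hIntcc i j).const_mul _), integral_add I1 ((hIntc i).const_mul _),
    integral_add (integrable_const _) ((hIntc j).const_mul _),
    integral_const, integral_const_mul, integral_const_mul, integral_const_mul,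
    hEc i, hEc j, hEcc i j]
  simp only [measure_univ, probReal_univ, ENNReal.toReal_one, smul_eq_mul, one_smul,
    Matrix.add_apply, Matrix.smul_apply, Matrix.diagonal_apply, hD]
  by_cases hij : i = j
  · subst hij
    simp only [if_pos rfl, eq_self_iff_true, if_true]
    field_simp
    ring
  · simp only [if_neg hij]
    field_simp
    ring
end

section
/- Let c₁, …, cₙ be mutually independent Bernoulli random variables with P(cᵢ = 1) = pᵢ ∈ (0,1], and let C := Diag(c₁/p₁, …, cₙ/pₙ). Let D := A + B K and L := B K, and sᵢ := Σ_{k=1}^{n} L_{k,i}². Then for every vector x ∈ ℝⁿ, E[ ‖(A + B K C) x‖² ] = xᵀ ( Dᵀ D + Diag(s₁(1/p₁ − 1), …, sₙ(1/pₙ − 1)) ) x, where ‖·‖ is the Euclidean norm. -/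
open MeasureTheory ProbabilityTheory Matrix

/-- If `c₁, …, cₙ` are mutually independent Bernoulli random variables
with parameters `pᵢ ∈ (0,1]`, `C := Diag(c₁/p₁, …, cₙ/pₙ)`, `D := A + B K`, `L := B K`,
`sᵢ := Σₖ L_{k,i}²`, then for every `x ∈ ℝⁿ`,
`E[‖(A + B K C) x‖²] = xᵀ (Dᵀ D + Diag(s₁(1/p₁ − 1), …, sₙ(1/pₙ − 1))) x`. -/
theorem expected_squared_norm_image
    {n m : ℕ} (A : Matrix (Fin n) (Fin n) ℝ) (B : Matrix (Fin n) (Fin m) ℝ)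
    (K : Matrix (Fin m) (Fin n) ℝ)
    {Ω : Type*} [MeasurableSpace Ω] (μ : Measure Ω) [IsProbabilityMeasure μ]
    (p : Fin n → ℝ) (hp : ∀ i, p i ∈ Set.Ioc (0 : ℝ) 1)
    (c : Fin n → Ω → ℝ)
    (hmeas : ∀ i, Measurable (c i))
    (h01 : ∀ i ω, c i ω = 0 ∨ c i ω = 1)
    (hber : ∀ i, μ {ω | c i ω = 1} = ENNReal.ofReal (p i))
    (hindep : iIndepFun (m := fun _ : Fin n => (inferInstance : MeasurableSpace ℝ)) c μ)
    (x : Fin n → ℝ) :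
    (∫ ω, ∑ i, (((A + B * K * Matrix.diagonal (fun i => c i ω / p i)).mulVec x) i) ^ 2 ∂μ) =
      x ⬝ᵥ (((A + B * K)ᵀ * (A + B * K) + Matrix.diagonal
        (fun i => (∑ k, ((B * K) k i) ^ 2) * (1 / p i - 1))).mulVec x) := by
  have hp0 : ∀ i, p i ≠ 0 := fun i => (hp i).1.ne'
  set L : Matrix (Fin n) (Fin n) ℝ := B * K with hLdef
  -- integrability of c i and c i * c j
  have hint : ∀ i, Integrable (c i) μ := by
    intro i
    refine (integrable_const (1:ℝ)).mono' (hmeas i).aestronglyMeasurable ?_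
    filter_upwards with ω
    rcases h01 i ω with h | h <;> simp [h]
  have hint2 : ∀ i j, Integrable (fun ω => c i ω * c j ω) μ := by
    intro i j
    refine (integrable_const (1:ℝ)).mono' ((hmeas i).mul (hmeas j)).aestronglyMeasurable ?_
    filter_upwards with ω
    rcases h01 i ω with h | h <;> rcases h01 j ω with h' | h' <;> simp [h, h']
  -- expectation of c i
  have hEc : ∀ i, ∫ ω, c i ω ∂μ = p i := by
    intro i
    have hs : MeasurableSet {ω | c i ω = 1} := (hmeas i) (measurableSet_singleton 1)
    have hind : (fun ω => c i ω) = Set.indicator {ω | c i ω = 1} (fun _ => (1:ℝ)) := by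
      funext ω
      rcases h01 i ω with h | h <;> simp [Set.indicator, h]
    rw [hind, integral_indicator hs, setIntegral_const, smul_eq_mul, mul_one, measureReal_def, hber i,
      ENNReal.toReal_ofReal (hp i).1.le]
  -- expectation of products
  have hEcc : ∀ i j, ∫ ω, c i ω * c j ω ∂μ
      = p i * p j + (if i = j then p i - p i * p i else 0) := by
    intro i j
    by_cases hij : i = j
    · subst hij
      have : (fun ω => c i ω * c i ω) = fun ω => c i ω := by
        funext ω; rcases h01 i ω with h | h <;> simp [h]
      rw [this, hEc i]
      simp
    · have hI : IndepFun (c i) (c j) μ := hindep.indepFun hij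
      have h2 := IndepFun.integral_mul_eq_mul_integral hI (hint i).aestronglyMeasurable (hint j).aestronglyMeasurable
      have h3 : ∫ ω, c i ω * c j ω ∂μ = integral μ (c i * c j) := by rfl
      rw [h3, h2, hEc i, hEc j]
      simp [hij]
  -- normalized variables
  set u : Fin n → Ω → ℝ := fun i ω => c i ω / p i with hu
  have hueq : ∀ i, u i = fun ω => (p i)⁻¹ * c i ω := by
    intro i; funext ω; rw [hu]; exact div_eq_inv_mul _ _
  have hintu : ∀ i, Integrable (u i) μ := by
    intro i; rw [hueq i]; exact (hint i).const_mul _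
  have huu : ∀ i j, (fun ω => u i ω * u j ω)
      = fun ω => ((p i)⁻¹ * (p j)⁻¹) * (c i ω * c j ω) := by
    intro i j; funext ω
    show (c i ω / p i) * (c j ω / p j) = _
    rw [div_mul_div_comm, div_eq_mul_inv, mul_inv]
    ring
  have hintuu : ∀ i j, Integrable (fun ω => u i ω * u j ω) μ := by
    intro i j; rw [huu]; exact (hint2 i j).const_mul _
  have hEu : ∀ i, ∫ ω, u i ω ∂μ = 1 := by
    intro i
    rw [hueq i, integral_const_mul, hEc i, inv_mul_cancel₀ (hp0 i)]
  have hEuu : ∀ i j, ∫ ω, u i ω * u j ω ∂μ = 1 + (if i = j then 1 / p i - 1 else 0) := by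
    intro i j
    rw [huu i j, integral_const_mul, hEcc i j]
    by_cases hij : i = j
    · subst hij; simp only [if_pos rfl, if_true]; field_simp; ring
    · simp only [if_neg hij, add_zero, mul_zero]
      rw [← mul_inv]
      exact inv_mul_cancel₀ (mul_ne_zero (hp0 i) (hp0 j))
  -- abbreviations
  set a : Fin n → ℝ := fun k => A.mulVec x k with ha
  set t : Fin n → Fin n → ℝ := fun k j => L k j * x j with htdef
  -- pointwise entries
  have entry : ∀ (ω : Ω) (k : Fin n),
      ((A + L * Matrix.diagonal (fun i => c i ω / p i)).mulVec x) k
        = a k + ∑ j, t k j * u j ω := by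
    intro ω k
    rw [Matrix.add_mulVec, Pi.add_apply, ← Matrix.mulVec_mulVec]
    congr 1
    show (L *ᵥ ((Matrix.diagonal fun i => c i ω / p i) *ᵥ x)) k = _
    have hdiag : (Matrix.diagonal fun i => c i ω / p i) *ᵥ x = fun j => (c j ω / p j) * x j := by
      funext j; exact Matrix.mulVec_diagonal _ _ _
    rw [hdiag]
    simp only [Matrix.mulVec, dotProduct]
    refine Finset.sum_congr rfl fun j _ => ?_
    simp only [htdef, hu]
    ring
  -- pointwise expansion of the squared norm
  have key : ∀ ω : Ω,
      (∑ k, (((A + L * Matrix.diagonal fun i => c i ω / p i).mulVec x) k) ^ 2)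
        = (∑ k, a k ^ 2) + ((∑ j, (2 * ∑ k, a k * t k j) * u j ω)
          + ∑ i, ∑ j, (∑ k, t k i * t k j) * (u i ω * u j ω)) := by
    intro ω
    have e1 : ∀ k, (((A + L * Matrix.diagonal fun i => c i ω / p i).mulVec x) k) ^ 2
        = a k ^ 2 + ((∑ j, (2 * (a k * t k j)) * u j ω)
          + ∑ i, ∑ j, (t k i * t k j) * (u i ω * u j ω)) := by
      intro k
      rw [entry ω k, add_sq]
      have e2 : (∑ j, t k j * u j ω) ^ 2 = ∑ i, ∑ j, (t k i * t k j) * (u i ω * u j ω) := by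
        rw [sq, Finset.sum_mul_sum]
        exact Finset.sum_congr rfl fun i _ => Finset.sum_congr rfl fun j _ => by ring
      have e3 : 2 * a k * (∑ j, t k j * u j ω) = ∑ j, (2 * (a k * t k j)) * u j ω := by
        rw [Finset.mul_sum]
        exact Finset.sum_congr rfl fun j _ => by ring
      rw [e2, e3, add_assoc]
    simp only [e1]
    rw [Finset.sum_add_distrib, Finset.sum_add_distrib]
    congr 1
    congr 1
    · rw [Finset.sum_comm]
      refine Finset.sum_congr rfl fun j _ => ?_
      rw [← Finset.sum_mul, ← Finset.mul_sum]
    · rw [Finset.sum_comm]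
      refine Finset.sum_congr rfl fun i _ => ?_
      rw [Finset.sum_comm]
      refine Finset.sum_congr rfl fun j _ => ?_
      rw [← Finset.sum_mul]
  -- integrate
  have hI1 : Integrable (fun ω => ∑ j, (2 * ∑ k, a k * t k j) * u j ω) μ :=
    integrable_finset_sum _ fun j _ => (hintu j).const_mul _
  have hI2 : Integrable (fun ω => ∑ i, ∑ j, (∑ k, t k i * t k j) * (u i ω * u j ω)) μ :=
    integrable_finset_sum _ fun i _ =>
      integrable_finset_sum _ fun j _ => (hintuu i j).const_mul _
  have hInt : (∫ ω, ∑ i, (((A + L * Matrix.diagonal fun i => c i ω / p i).mulVec x) i) ^ 2 ∂μ)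
      = (∑ k, a k ^ 2) + ((∑ j, (2 * ∑ k, a k * t k j))
        + ∑ i, ∑ j, (∑ k, t k i * t k j) * (1 + if i = j then 1 / p i - 1 else 0)) := by
    simp only [key]
    have hI12 : Integrable (fun ω => (∑ j, (2 * ∑ k, a k * t k j) * u j ω)
        + ∑ i, ∑ j, (∑ k, t k i * t k j) * (u i ω * u j ω)) μ := hI1.add hI2
    rw [integral_add (integrable_const _) hI12]
    rw [integral_add hI1 hI2, integral_const,
      integral_finset_sum _ (fun j _ => (hintu j).const_mul _),
      integral_finset_sum _
        (fun i _ => integrable_finset_sum _ fun j _ => (hintuu i j).const_mul _)]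
    simp only [measure_univ, probReal_univ, ENNReal.toReal_one, one_smul]
    congr 1
    congr 1
    · refine Finset.sum_congr rfl fun j _ => ?_
      rw [integral_const_mul, hEu j, mul_one]
    · refine Finset.sum_congr rfl fun i _ => ?_
      rw [integral_finset_sum _ (fun j _ => (hintuu i j).const_mul _)]
      refine Finset.sum_congr rfl fun j _ => ?_
      rw [integral_const_mul, hEuu i j]
  rw [hInt]
  -- rewrite the RHS
  have hD : ∀ k, ((A + L).mulVec x) k = a k + ∑ j, t k j := by
    intro k
    rw [Matrix.add_mulVec, Pi.add_apply]
    rfl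
  have hR : x ⬝ᵥ (((A + L)ᵀ * (A + L) + Matrix.diagonal
        (fun i => (∑ k, (L k i) ^ 2) * (1 / p i - 1))).mulVec x)
      = (∑ k, (a k + ∑ j, t k j) ^ 2)
        + ∑ i, (∑ k, t k i * t k i) * (1 / p i - 1) := by
    rw [Matrix.add_mulVec, dotProduct_add]
    congr 1
    · rw [← Matrix.mulVec_mulVec, Matrix.dotProduct_mulVec, Matrix.vecMul_transpose]
      simp only [dotProduct]
      exact Finset.sum_congr rfl fun k _ => by rw [hD k]; ring
    · simp only [dotProduct, Matrix.mulVec_diagonal]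
      refine Finset.sum_congr rfl fun i _ => ?_
      have h4 : (∑ k, t k i * t k i) = (∑ k, L k i ^ 2) * x i ^ 2 := by
        rw [Finset.sum_mul]
        exact Finset.sum_congr rfl fun k _ => by simp only [htdef]; ring
      rw [h4]
      ring
  rw [hR]
  -- final algebra
  have split : ∀ i : Fin n,
      (∑ j, (∑ k, t k i * t k j) * (1 + if i = j then 1 / p i - 1 else 0))
        = (∑ j, (∑ k, t k i * t k j)) + (∑ k, t k i * t k i) * (1 / p i - 1) := by
    intro i
    simp only [mul_add, mul_one, mul_ite, mul_zero, Finset.sum_add_distrib,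
      Finset.sum_ite_eq, Finset.mem_univ, if_true]
  simp only [split]
  rw [Finset.sum_add_distrib]
  have quad : (∑ k, a k ^ 2) + ((∑ j, 2 * ∑ k, a k * t k j)
      + ∑ i, ∑ j, (∑ k, t k i * t k j)) = ∑ k, (a k + ∑ j, t k j) ^ 2 := by
    have e1 : ∀ k, (a k + ∑ j, t k j) ^ 2
        = a k ^ 2 + ((∑ j, 2 * (a k * t k j)) + ∑ i, ∑ j, t k i * t k j) := by
      intro k
      rw [add_sq]
      have e2 : (∑ j, t k j) ^ 2 = ∑ i, ∑ j, t k i * t k j := by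
        rw [sq, Finset.sum_mul_sum]
      have e3 : 2 * a k * (∑ j, t k j) = ∑ j, 2 * (a k * t k j) := by
        rw [Finset.mul_sum]
        exact Finset.sum_congr rfl fun j _ => by ring
      rw [e2, e3, add_assoc]
    simp only [e1]
    rw [Finset.sum_add_distrib, Finset.sum_add_distrib]
    congr 1
    congr 1
    · rw [Finset.sum_comm]
      refine Finset.sum_congr rfl fun j _ => ?_
      rw [← Finset.mul_sum]
    · calc (∑ i, ∑ j, ∑ k, t k i * t k j)
          = ∑ i, ∑ k, ∑ j, t k i * t k j :=
            Finset.sum_congr rfl fun i _ => Finset.sum_comm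
        _ = ∑ k, ∑ i, ∑ j, t k i * t k j := Finset.sum_comm
  rw [← quad]
  ring
end

section
/- Consider the closed-loop stochastic recursion x(k+1) = (A + B K C(k)) x(k) with deterministic initial condition x(0) = x₀ ∈ ℝⁿ, where C(k) = Diag(c₁(k)/p, …, cₙ(k)/p) and the family (cᵢ(k))_{k∈ℕ, 1≤i≤n} consists of mutually independent Bernoulli random variables each with parameter p ∈ (0,1]. Let D := A + B K, L := B K, and f(p) := ‖Dᵀ D + ((1−p)/p) · Diag(Lᵀ L)‖₂ (spectral norm). Then for every k ∈ ℕ, E[‖x(k+1)‖²] ≤ f(p) · E[‖x(k)‖²]. -/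
open MeasureTheory ProbabilityTheory Matrix Filter

/-- The spectral norm (ℓ²-operator norm) of a real square matrix. -/
noncomputable def specNorm {n : ℕ} (M : Matrix (Fin n) (Fin n) ℝ) : ℝ :=
  ‖LinearMap.toContinuousLinearMap (Matrix.toEuclideanLin M)‖

lemma quad_bound {n : ℕ} (S : Matrix (Fin n) (Fin n) ℝ) (v : Fin n → ℝ) :
    v ⬝ᵥ S.mulVec v ≤ specNorm S * ∑ i, v i ^ 2 := by
  set V : EuclideanSpace ℝ (Fin n) := (WithLp.equiv 2 (Fin n → ℝ)).symm v with hV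
  have hnormsq : ‖V‖ ^ 2 = ∑ i, v i ^ 2 := by
    rw [EuclideanSpace.norm_eq, Real.sq_sqrt (by positivity)]
    simp [hV, sq_abs]
  have hdot : v ⬝ᵥ S.mulVec v = inner ℝ V ((Matrix.toEuclideanLin S) V) := by
    rw [Matrix.toEuclideanLin_apply]
    simp [PiLp.inner_apply, dotProduct, RCLike.inner_apply, mul_comm]
    rfl
  rw [hdot]
  calc inner ℝ V ((Matrix.toEuclideanLin S) V)
      ≤ ‖V‖ * ‖(Matrix.toEuclideanLin S) V‖ := real_inner_le_norm _ _
    _ ≤ ‖V‖ * (specNorm S * ‖V‖) := by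
        apply mul_le_mul_of_nonneg_left _ (norm_nonneg _)
        exact (LinearMap.toContinuousLinearMap (Matrix.toEuclideanLin S)).le_opNorm V
    _ = specNorm S * ∑ i, v i ^ 2 := by rw [← hnormsq]; ring


lemma x_rep {n m : ℕ} (A : Matrix (Fin n) (Fin n) ℝ) (B : Matrix (Fin n) (Fin m) ℝ)
    (K : Matrix (Fin m) (Fin n) ℝ) {Ω : Type*} [MeasurableSpace Ω]
    (p : ℝ) (c : ℕ → Fin n → Ω → ℝ)
    (x₀ : Fin n → ℝ) (x : ℕ → Ω → Fin n → ℝ)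
    (hx0 : ∀ ω, x 0 ω = x₀)
    (hxrec : ∀ k ω, x (k + 1) ω =
      (A + B * K * Matrix.diagonal (fun i => c k i ω / p)).mulVec (x k ω))
    (k : ℕ) :
    ∃ φ : ((((Finset.range k) ×ˢ (Finset.univ : Finset (Fin n))) : Finset (ℕ × Fin n)) → ℝ) →
        (Fin n → ℝ), Measurable φ ∧ ∀ ω, x k ω = φ (fun i => c i.1.1 i.1.2 ω) := by
  induction k with
  | zero => exact ⟨fun _ => x₀, measurable_const, fun ω => hx0 ω⟩
  | succ k ih =>
    obtain ⟨φ, hφm, hφ⟩ := ih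
    have hmem : ∀ i : Fin n, ((k, i) : ℕ × Fin n) ∈
        (Finset.range (k+1)) ×ˢ (Finset.univ : Finset (Fin n)) := by
      intro i; simp [Finset.mem_product]
    have hmem' : ∀ q : ((Finset.range k) ×ˢ (Finset.univ : Finset (Fin n)) : Finset (ℕ × Fin n)),
        (q : ℕ × Fin n) ∈ (Finset.range (k+1)) ×ˢ (Finset.univ : Finset (Fin n)) := by
      rintro ⟨⟨a, b⟩, hq⟩
      simp only [Finset.mem_product, Finset.mem_range, Finset.mem_univ, and_true] at hq ⊢
      omega
    refine ⟨fun y => (A + B * K * Matrix.diagonal (fun i => y ⟨(k, i), hmem i⟩ / p)).mulVec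
        (φ (fun q => y ⟨q.1, hmem' q⟩)), ?_, ?_⟩
    · apply measurable_pi_lambda
      intro i
      have : (fun y : (((Finset.range (k+1)) ×ˢ (Finset.univ : Finset (Fin n))) :
          Finset (ℕ × Fin n)) → ℝ =>
          ((A + B * K * Matrix.diagonal (fun i => y ⟨(k, i), hmem i⟩ / p)).mulVec
            (φ (fun q => y ⟨q.1, hmem' q⟩))) i) =
          fun y => ∑ j, (A i j + (B * K) i j * (y ⟨(k, j), hmem j⟩ / p)) *
            (φ (fun q => y ⟨q.1, hmem' q⟩)) j := by
        funext y
        simp [Matrix.mulVec, dotProduct, Matrix.add_apply, Matrix.mul_diagonal]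
      rw [this]
      apply Finset.measurable_sum
      intro j _
      have hrest : Measurable fun y : (((Finset.range (k+1)) ×ˢ
          (Finset.univ : Finset (Fin n))) : Finset (ℕ × Fin n)) → ℝ =>
          φ (fun q => y ⟨q.1, hmem' q⟩) :=
        hφm.comp (measurable_pi_lambda _ (fun q => measurable_pi_apply _))
      have h2 : Measurable fun y : (((Finset.range (k+1)) ×ˢ
          (Finset.univ : Finset (Fin n))) : Finset (ℕ × Fin n)) → ℝ =>
          (φ (fun q => y ⟨q.1, hmem' q⟩)) j := (measurable_pi_apply j).comp hrest
      have h1 : Measurable fun y : (((Finset.range (k+1)) ×ˢ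
          (Finset.univ : Finset (Fin n))) : Finset (ℕ × Fin n)) → ℝ =>
          A i j + (B * K) i j * (y ⟨(k, j), hmem j⟩ / p) :=
        by fun_prop
      exact h1.mul h2
    · intro ω
      rw [hxrec k ω, hφ ω]

lemma x_indep {n m : ℕ} (A : Matrix (Fin n) (Fin n) ℝ) (B : Matrix (Fin n) (Fin m) ℝ)
    (K : Matrix (Fin m) (Fin n) ℝ) {Ω : Type*} [MeasurableSpace Ω] (μ : Measure Ω)
    (p : ℝ) (c : ℕ → Fin n → Ω → ℝ)
    (hmeas : ∀ k i, Measurable (c k i))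
    (hindep : iIndepFun
      (fun (ki : ℕ × Fin n) ω => c ki.1 ki.2 ω) μ)
    (x₀ : Fin n → ℝ) (x : ℕ → Ω → Fin n → ℝ)
    (hx0 : ∀ ω, x 0 ω = x₀)
    (hxrec : ∀ k ω, x (k + 1) ω =
      (A + B * K * Matrix.diagonal (fun i => c k i ω / p)).mulVec (x k ω))
    (k : ℕ) :
    IndepFun (x k) (fun ω i => c k i ω) μ := by
  obtain ⟨φ, hφm, hφ⟩ := x_rep A B K p c x₀ x hx0 hxrec k
  have hdisj : Disjoint ((Finset.range k) ×ˢ (Finset.univ : Finset (Fin n)))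
      (({k} : Finset ℕ) ×ˢ (Finset.univ : Finset (Fin n))) := by
    rw [Finset.disjoint_left]
    rintro ⟨a, b⟩ ha hb
    simp [Finset.mem_product] at ha hb
    omega
  have hbase := hindep.indepFun_finset _ _ hdisj (fun ki => hmeas ki.1 ki.2)
  have hmemS : ∀ i : Fin n, ((k, i) : ℕ × Fin n) ∈
      ({k} : Finset ℕ) ×ˢ (Finset.univ : Finset (Fin n)) := by
    intro i; simp [Finset.mem_product]
  have hψm : Measurable fun z : ↥(({k} : Finset ℕ) ×ˢ (Finset.univ : Finset (Fin n))) → ℝ =>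
      (fun i : Fin n => z ⟨(k, i), hmemS i⟩) :=
    measurable_pi_lambda _ (fun i => measurable_pi_apply _)
  have hcomp := hbase.comp hφm hψm
  have h1 : (φ ∘ fun ω (q : ↥((Finset.range k) ×ˢ (Finset.univ : Finset (Fin n)))) =>
      c (q : ℕ × Fin n).1 (q : ℕ × Fin n).2 ω) = x k := by
    funext ω; exact (hφ ω).symm
  have h2 : ((fun z : ↥(({k} : Finset ℕ) ×ˢ (Finset.univ : Finset (Fin n))) → ℝ =>
      (fun i : Fin n => z ⟨(k, i), hmemS i⟩)) ∘
      fun ω (q : ↥(({k} : Finset ℕ) ×ˢ (Finset.univ : Finset (Fin n)))) =>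
      c (q : ℕ × Fin n).1 (q : ℕ × Fin n).2 ω) = fun ω i => c k i ω := by
    funext ω; rfl
  rwa [h1, h2] at hcomp

lemma x_bdd {n m : ℕ} (A : Matrix (Fin n) (Fin n) ℝ) (B : Matrix (Fin n) (Fin m) ℝ)
    (K : Matrix (Fin m) (Fin n) ℝ) {Ω : Type*} [MeasurableSpace Ω]
    (p : ℝ) (hp : 0 < p) (c : ℕ → Fin n → Ω → ℝ)
    (h01 : ∀ k i ω, c k i ω = 0 ∨ c k i ω = 1)
    (x₀ : Fin n → ℝ) (x : ℕ → Ω → Fin n → ℝ)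
    (hx0 : ∀ ω, x 0 ω = x₀)
    (hxrec : ∀ k ω, x (k + 1) ω =
      (A + B * K * Matrix.diagonal (fun i => c k i ω / p)).mulVec (x k ω))
    (k : ℕ) :
    ∃ C : ℝ, 0 ≤ C ∧ ∀ ω i, |x k ω i| ≤ C := by
  induction k with
  | zero =>
    refine ⟨∑ i, |x₀ i|, Finset.sum_nonneg (fun i _ => abs_nonneg _), fun ω i => ?_⟩
    rw [hx0]
    exact Finset.single_le_sum (f := fun i => |x₀ i|) (fun j _ => abs_nonneg _)
      (Finset.mem_univ i)
  | succ k ih =>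
    obtain ⟨C, hC0, hC⟩ := ih
    set Mb : ℝ := ∑ i : Fin n, ∑ j : Fin n, (|A i j| + |(B * K) i j| / p) with hMb
    have hMb0 : 0 ≤ Mb :=
      Finset.sum_nonneg fun i _ => Finset.sum_nonneg fun j _ => by positivity
    refine ⟨Mb * C, mul_nonneg hMb0 hC0, fun ω i => ?_⟩
    have hxe : x (k+1) ω i = ∑ j, (A i j + (B * K) i j * (c k j ω / p)) * x k ω j := by
      rw [hxrec k ω]
      simp [Matrix.mulVec, dotProduct, Matrix.add_apply, Matrix.mul_diagonal]
    rw [hxe]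
    calc |∑ j, (A i j + (B * K) i j * (c k j ω / p)) * x k ω j|
        ≤ ∑ j, |(A i j + (B * K) i j * (c k j ω / p)) * x k ω j| :=
          Finset.abs_sum_le_sum_abs _ _
      _ ≤ ∑ j, (|A i j| + |(B * K) i j| / p) * C := by
          apply Finset.sum_le_sum
          intro j _
          rw [abs_mul]
          apply mul_le_mul _ (hC ω j) (abs_nonneg _) (by positivity)
          calc |A i j + (B * K) i j * (c k j ω / p)|
              ≤ |A i j| + |(B * K) i j * (c k j ω / p)| := abs_add_le _ _
            _ ≤ |A i j| + |(B * K) i j| / p := by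
                rw [abs_mul]
                have hle : |c k j ω / p| ≤ 1 / p := by
                  rcases h01 k j ω with h | h <;> rw [h]
                  · simp; positivity
                  · rw [abs_div, abs_of_pos hp, abs_one]
                have : |(B * K) i j| * |c k j ω / p| ≤ |(B * K) i j| / p := by
                  calc |(B * K) i j| * |c k j ω / p| ≤ |(B * K) i j| * (1 / p) :=
                        mul_le_mul_of_nonneg_left hle (abs_nonneg _)
                    _ = |(B * K) i j| / p := by ring
                linarith
      _ = (∑ j, (|A i j| + |(B * K) i j| / p)) * C := by rw [Finset.sum_mul]
      _ ≤ Mb * C := by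
          apply mul_le_mul_of_nonneg_right _ hC0
          rw [hMb]
          exact Finset.single_le_sum (f := fun i => ∑ j, (|A i j| + |(B * K) i j| / p))
            (fun i _ => Finset.sum_nonneg fun j _ => by positivity) (Finset.mem_univ i)

lemma bern_int {Ω : Type*} [MeasurableSpace Ω] (μ : Measure Ω) [IsProbabilityMeasure μ]
    (p : ℝ) (hp : 0 ≤ p) (f : Ω → ℝ) (hm : Measurable f)
    (h01 : ∀ ω, f ω = 0 ∨ f ω = 1) (hb : μ {ω | f ω = 1} = ENNReal.ofReal p) :
    ∫ ω, f ω ∂μ = p := by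
  have hset : MeasurableSet {ω | f ω = 1} := hm (measurableSet_singleton 1)
  have hf : f = Set.indicator {ω | f ω = 1} (fun _ => (1 : ℝ)) := by
    funext ω
    rcases h01 ω with h | h <;> rw [h]
    · rw [eq_comm, Set.indicator_apply_eq_zero]
      intro hω; simp at hω; rw [hω] at h; norm_num at h
    · rw [eq_comm, Set.indicator_apply_eq_self.mpr]
      intro hω; exact absurd h hω
  rw [hf, MeasureTheory.integral_indicator_const _ hset, measureReal_def, hb]
  simp [ENNReal.toReal_ofReal hp]

/-- For the closed-loop stochastic recursion
`x(k+1) = (A + B K C(k)) x(k)` with `C(k) = Diag(c₁(k)/p, …, cₙ(k)/p)` built from mutually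
independent Bernoulli(`p`) random variables, with `D := A + B K`, `L := B K` and
`f(p) := ‖Dᵀ D + ((1−p)/p)·Diag(Lᵀ L)‖₂`, one has
`E[‖x(k+1)‖²] ≤ f(p) · E[‖x(k)‖²]` for every `k`. -/
theorem expected_square_norm_decay
    {n m : ℕ} (A : Matrix (Fin n) (Fin n) ℝ) (B : Matrix (Fin n) (Fin m) ℝ)
    (K : Matrix (Fin m) (Fin n) ℝ)
    {Ω : Type*} [MeasurableSpace Ω] (μ : Measure Ω) [IsProbabilityMeasure μ]
    (p : ℝ) (hp : p ∈ Set.Ioc (0 : ℝ) 1)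
    (c : ℕ → Fin n → Ω → ℝ)
    (hmeas : ∀ k i, Measurable (c k i))
    (h01 : ∀ k i ω, c k i ω = 0 ∨ c k i ω = 1)
    (hber : ∀ k i, μ {ω | c k i ω = 1} = ENNReal.ofReal p)
    (hindep : iIndepFun
      (fun (ki : ℕ × Fin n) ω => c ki.1 ki.2 ω) μ)
    (x₀ : Fin n → ℝ) (x : ℕ → Ω → Fin n → ℝ)
    (hx0 : ∀ ω, x 0 ω = x₀)
    (hxrec : ∀ k ω, x (k + 1) ω =
      (A + B * K * Matrix.diagonal (fun i => c k i ω / p)).mulVec (x k ω))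
    (k : ℕ) :
    (∫ ω, ∑ i, (x (k + 1) ω i) ^ 2 ∂μ) ≤
      specNorm ((A + B * K)ᵀ * (A + B * K) + ((1 - p) / p) •
          Matrix.diagonal (fun i => ((B * K)ᵀ * (B * K)) i i)) *
        (∫ ω, ∑ i, (x k ω i) ^ 2 ∂μ) := by
  obtain ⟨hp0, hp1⟩ := hp
  have hpne : p ≠ 0 := ne_of_gt hp0
  -- measurability of x
  have hxmeas : ∀ k', Measurable (x k') := by
    intro k'
    obtain ⟨φ, hφm, hφ⟩ := x_rep A B K p c x₀ x hx0 hxrec k'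
    have hrw : x k' = φ ∘ (fun ω (q : ↥((Finset.range k') ×ˢ (Finset.univ : Finset (Fin n)))) =>
        c (q : ℕ × Fin n).1 (q : ℕ × Fin n).2 ω) := funext hφ
    rw [hrw]
    exact hφm.comp (measurable_pi_lambda _ (fun q => hmeas _ _))
  have hxim : ∀ k' (i : Fin n), Measurable (fun ω => x k' ω i) :=
    fun k' i => (measurable_pi_apply i).comp (hxmeas k')
  obtain ⟨C, hC0, hC⟩ := x_bdd A B K p hp0 c h01 x₀ x hx0 hxrec k
  have hindepk : IndepFun (x k) (fun ω i => c k i ω) μ :=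
    x_indep A B K μ p c hmeas hindep x₀ x hx0 hxrec k
  -- Bernoulli moments
  have hEc : ∀ i, ∫ ω, c k i ω ∂μ = p :=
    fun i => bern_int μ p hp0.le (c k i) (hmeas k i) (h01 k i) (hber k i)
  have hcsq : ∀ i ω, c k i ω * c k i ω = c k i ω := by
    intro i ω; rcases h01 k i ω with h | h <;> rw [h] <;> ring
  have hEcc : ∀ i j, ∫ ω, c k i ω * c k j ω ∂μ = if i = j then p else p * p := by
    intro i j
    by_cases hij : i = j
    · subst hij
      rw [if_pos rfl]
      calc ∫ ω, c k i ω * c k i ω ∂μ = ∫ ω, c k i ω ∂μ :=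
            integral_congr_ae (Filter.Eventually.of_forall (hcsq i))
        _ = p := hEc i
    · rw [if_neg hij]
      have hne : ((k, i) : ℕ × Fin n) ≠ (k, j) := by
        simp only [Ne, Prod.mk.injEq, not_and]
        exact fun _ => hij
      have h := IndepFun.integral_mul_eq_mul_integral (hindep.indepFun hne) (hmeas k i).aestronglyMeasurable
        (hmeas k j).aestronglyMeasurable
      rw [show p * p = (∫ ω, c k i ω ∂μ) * ∫ ω, c k j ω ∂μ by rw [hEc i, hEc j]]
      exact h
  -- boundedness helpers
  have hcb : ∀ i ω, |c k i ω| ≤ 1 := by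
    intro i ω; rcases h01 k i ω with h | h <;> rw [h] <;> norm_num
  have hInt : ∀ (f : Ω → ℝ) (Cf : ℝ), Measurable f → (∀ ω, |f ω| ≤ Cf) → Integrable f μ := by
    intro f Cf hm hb
    refine (integrable_const Cf).mono' hm.aestronglyMeasurable ?_
    exact Filter.Eventually.of_forall (by simpa [Real.norm_eq_abs] using hb)
  -- entry coefficient measurability & bound
  have hem : ∀ i j : Fin n, Measurable (fun ω => A i j + (B * K) i j * (c k j ω / p)) :=
    fun i j => measurable_const.add (measurable_const.mul ((hmeas k j).div_const p))
  have heb : ∀ (i j : Fin n) ω, |A i j + (B * K) i j * (c k j ω / p)| ≤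
      |A i j| + |(B * K) i j| / p := by
    intro i j ω
    calc |A i j + (B * K) i j * (c k j ω / p)|
        ≤ |A i j| + |(B * K) i j * (c k j ω / p)| := abs_add_le _ _
      _ ≤ |A i j| + |(B * K) i j| / p := by
          rw [abs_mul, abs_div, abs_of_pos hp0]
          have h1 : |c k j ω| / p ≤ 1 / p := by
            gcongr
            exact hcb j ω
          have : |(B * K) i j| * (|c k j ω| / p) ≤ |(B * K) i j| * (1 / p) :=
            mul_le_mul_of_nonneg_left h1 (abs_nonneg _)
          have h2 : |(B * K) i j| * (1 / p) = |(B * K) i j| / p := by ring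
          linarith [this]
  -- integrability of quadratic terms in x
  have hxint : ∀ j j' : Fin n, Integrable (fun ω => x k ω j * x k ω j') μ := by
    intro j j'
    refine hInt _ (C * C) ((hxim k j).mul (hxim k j')) (fun ω => ?_)
    rw [abs_mul]
    exact mul_le_mul (hC ω j) (hC ω j') (abs_nonneg _) hC0
  -- integrability of the full products
  have hterm_int : ∀ i j j' : Fin n, Integrable (fun ω =>
      ((A i j + (B * K) i j * (c k j ω / p)) * x k ω j) *
      ((A i j' + (B * K) i j' * (c k j' ω / p)) * x k ω j')) μ := by
    intro i j j'
    refine hInt _ (((|A i j| + |(B * K) i j| / p) * C) * ((|A i j'| + |(B * K) i j'| / p) * C))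
      (((hem i j).mul (hxim k j)).mul ((hem i j').mul (hxim k j'))) (fun ω => ?_)
    rw [abs_mul, abs_mul, abs_mul]
    have h1 := heb i j ω; have h2 := heb i j' ω
    have h3 := hC ω j; have h4 := hC ω j'
    apply mul_le_mul (mul_le_mul h1 h3 (abs_nonneg _) (by positivity))
      (mul_le_mul h2 h4 (abs_nonneg _) (by positivity)) (by positivity) (by positivity)
  -- Step A : expand the square
  have hsum : ∀ ω, ∑ i, (x (k + 1) ω i) ^ 2 = ∑ i, ∑ j, ∑ j',
      ((A i j + (B * K) i j * (c k j ω / p)) * x k ω j) *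
      ((A i j' + (B * K) i j' * (c k j' ω / p)) * x k ω j') := by
    intro ω
    refine Finset.sum_congr rfl fun i _ => ?_
    have hxe : x (k + 1) ω i = ∑ j, (A i j + (B * K) i j * (c k j ω / p)) * x k ω j := by
      rw [hxrec k ω]
      simp [Matrix.mulVec, dotProduct, Matrix.add_apply, Matrix.mul_diagonal]
    rw [hxe, sq, Finset.sum_mul_sum]
  -- Step B : interchange integral and sums
  have hLHS : (∫ ω, ∑ i, (x (k + 1) ω i) ^ 2 ∂μ) = ∑ i, ∑ j, ∑ j', ∫ ω,
      ((A i j + (B * K) i j * (c k j ω / p)) * x k ω j) *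
      ((A i j' + (B * K) i j' * (c k j' ω / p)) * x k ω j') ∂μ := by
    rw [integral_congr_ae (Filter.Eventually.of_forall hsum)]
    rw [integral_finset_sum _ (fun i _ => integrable_finset_sum _
      (fun j _ => integrable_finset_sum _ (fun j' _ => hterm_int i j j')))]
    refine Finset.sum_congr rfl fun i _ => ?_
    rw [integral_finset_sum _ (fun j _ => integrable_finset_sum _ (fun j' _ => hterm_int i j j'))]
    refine Finset.sum_congr rfl fun j _ => ?_
    rw [integral_finset_sum _ (fun j' _ => hterm_int i j j')]
  -- Step C : split by independence
  have hsplit : ∀ i j j' : Fin n, (∫ ω,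
      ((A i j + (B * K) i j * (c k j ω / p)) * x k ω j) *
      ((A i j' + (B * K) i j' * (c k j' ω / p)) * x k ω j') ∂μ) =
      (∫ ω, x k ω j * x k ω j' ∂μ) *
      (∫ ω, (A i j + (B * K) i j * (c k j ω / p)) *
        (A i j' + (B * K) i j' * (c k j' ω / p)) ∂μ) := by
    intro i j j'
    have hg : Measurable (fun v : Fin n → ℝ => v j * v j') :=
      (measurable_pi_apply j).mul (measurable_pi_apply j')
    have hh : Measurable (fun w : Fin n → ℝ =>
        (A i j + (B * K) i j * (w j / p)) * (A i j' + (B * K) i j' * (w j' / p))) :=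
      by fun_prop
    have hck : Measurable (fun ω (i : Fin n) => c k i ω) :=
      measurable_pi_lambda _ (fun i => hmeas k i)
    have hInd := hindepk.comp hg hh
    have hmul := hInd.integral_mul_eq_mul_integral ((hg.comp (hxmeas k)).aestronglyMeasurable)
      ((hh.comp hck).aestronglyMeasurable)
    have hre : (fun ω =>
        ((A i j + (B * K) i j * (c k j ω / p)) * x k ω j) *
        ((A i j' + (B * K) i j' * (c k j' ω / p)) * x k ω j')) =
        ((fun v : Fin n → ℝ => v j * v j') ∘ x k) *
        ((fun w : Fin n → ℝ => (A i j + (B * K) i j * (w j / p)) *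
          (A i j' + (B * K) i j' * (w j' / p))) ∘ (fun ω (i : Fin n) => c k i ω)) := by
      funext ω
      simp only [Pi.mul_apply, Function.comp_apply]
      ring
    rw [hre, hmul]
    rfl
  -- Step D : compute the coefficient expectation
  have hIh : ∀ i j j' : Fin n, (∫ ω, (A i j + (B * K) i j * (c k j ω / p)) *
      (A i j' + (B * K) i j' * (c k j' ω / p)) ∂μ) =
      (A + B * K) i j * (A + B * K) i j' +
      (if j = j' then ((1 - p) / p) * ((B * K) i j * (B * K) i j') else 0) := by
    intro i j j'
    have i1 : Integrable (fun ω => c k j' ω) μ := hInt _ 1 (hmeas k j') (hcb j')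
    have i2 : Integrable (fun ω => c k j ω) μ := hInt _ 1 (hmeas k j) (hcb j)
    have i3 : Integrable (fun ω => c k j ω * c k j' ω) μ := by
      refine hInt _ 1 ((hmeas k j).mul (hmeas k j')) (fun ω => ?_)
      rw [abs_mul]
      calc |c k j ω| * |c k j' ω| ≤ 1 * 1 :=
            mul_le_mul (hcb j ω) (hcb j' ω) (abs_nonneg _) zero_le_one
        _ = 1 := one_mul 1
    have hre : (fun ω => (A i j + (B * K) i j * (c k j ω / p)) *
        (A i j' + (B * K) i j' * (c k j' ω / p))) =
        fun ω => (A i j * A i j' + (A i j * (B * K) i j' / p) * c k j' ω) +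
          (((B * K) i j * A i j' / p) * c k j ω +
           ((B * K) i j * (B * K) i j' / (p * p)) * (c k j ω * c k j' ω)) := by
      funext ω; field_simp
    have g1 : Integrable (fun _ : Ω => A i j * A i j') μ := integrable_const _
    have g2 : Integrable (fun ω => (A i j * (B * K) i j' / p) * c k j' ω) μ := i1.const_mul _
    have g3 : Integrable (fun ω => ((B * K) i j * A i j' / p) * c k j ω) μ := i2.const_mul _
    have g4 : Integrable
        (fun ω => ((B * K) i j * (B * K) i j' / (p * p)) * (c k j ω * c k j' ω)) μ :=
      i3.const_mul _
    have g12 : Integrable (fun ω => A i j * A i j' + (A i j * (B * K) i j' / p) * c k j' ω) μ :=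
      g1.add g2
    have g34 : Integrable (fun ω => ((B * K) i j * A i j' / p) * c k j ω +
        ((B * K) i j * (B * K) i j' / (p * p)) * (c k j ω * c k j' ω)) μ := g3.add g4
    have e1 : ∫ (_ : Ω), A i j * A i j' ∂μ = A i j * A i j' := by simp
    have e2 : ∫ ω, A i j * (B * K) i j' / p * c k j' ω ∂μ = A i j * (B * K) i j' / p * p := by
      rw [integral_const_mul, hEc j']
    have e3 : ∫ ω, (B * K) i j * A i j' / p * c k j ω ∂μ = (B * K) i j * A i j' / p * p := by
      rw [integral_const_mul, hEc j]
    have e4 : ∫ ω, (B * K) i j * (B * K) i j' / (p * p) * (c k j ω * c k j' ω) ∂μ =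
        (B * K) i j * (B * K) i j' / (p * p) * (if j = j' then p else p * p) := by
      rw [integral_const_mul, hEcc j j']
    rw [hre, integral_add g12 g34, integral_add g1 g2, integral_add g3 g4, e1, e2, e3, e4]
    simp only [Matrix.add_apply]
    by_cases hjj : j = j'
    · rw [if_pos hjj, if_pos hjj]
      field_simp
      ring
    · rw [if_neg hjj, if_neg hjj]
      field_simp
      ring
    -- Step E : matrix entry identification
  have hSentry : ∀ j j' : Fin n,
      (∑ i, ((A + B * K) i j * (A + B * K) i j' +
        (if j = j' then ((1 - p) / p) * ((B * K) i j * (B * K) i j') else 0))) =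
      ((A + B * K)ᵀ * (A + B * K) + ((1 - p) / p) •
      Matrix.diagonal (fun i => ((B * K)ᵀ * (B * K)) i i)) j j' := by
    intro j j'
    rw [Finset.sum_add_distrib, Matrix.add_apply, Matrix.smul_apply, smul_eq_mul]
    have h1 : (∑ i, (A + B * K) i j * (A + B * K) i j') =
        ((A + B * K)ᵀ * (A + B * K)) j j' := by
      rw [Matrix.mul_apply]
      exact Finset.sum_congr rfl fun i _ => by rw [Matrix.transpose_apply]
    rw [h1]
    by_cases hjj : j = j'
    · subst hjj
      rw [Matrix.diagonal_apply_eq]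
      simp only [eq_self_iff_true, if_true]
      rw [← Finset.mul_sum]
      congr 1
    · rw [Matrix.diagonal_apply_ne _ hjj]
      simp only [if_neg hjj, Finset.sum_const_zero, mul_zero]
  -- combine
  have hmain : (∫ ω, ∑ i, (x (k + 1) ω i) ^ 2 ∂μ) =
      ∑ j, ∑ j', (∫ ω, x k ω j * x k ω j' ∂μ) * (((A + B * K)ᵀ * (A + B * K) + ((1 - p) / p) •
      Matrix.diagonal (fun i => ((B * K)ᵀ * (B * K)) i i)) j j') := by
    rw [hLHS]
    simp_rw [hsplit, hIh]
    rw [Finset.sum_comm]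
    refine Finset.sum_congr rfl fun j _ => ?_
    rw [Finset.sum_comm]
    refine Finset.sum_congr rfl fun j' _ => ?_
    rw [← Finset.mul_sum, hSentry j j']
  -- Step F : recognize the quadratic form
  have hdoteq : ∀ ω, (x k ω) ⬝ᵥ (((A + B * K)ᵀ * (A + B * K) + ((1 - p) / p) •
      Matrix.diagonal (fun i => ((B * K)ᵀ * (B * K)) i i))).mulVec (x k ω) =
      ∑ j, ∑ j', (x k ω j * x k ω j') * (((A + B * K)ᵀ * (A + B * K) + ((1 - p) / p) •
      Matrix.diagonal (fun i => ((B * K)ᵀ * (B * K)) i i)) j j') := by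
    intro ω
    simp only [dotProduct, Matrix.mulVec, Finset.mul_sum]
    exact Finset.sum_congr rfl fun j _ => Finset.sum_congr rfl fun j' _ => by ring
  have hdotint_eq : (∑ j, ∑ j', (∫ ω, x k ω j * x k ω j' ∂μ) * (((A + B * K)ᵀ * (A + B * K) + ((1 - p) / p) •
      Matrix.diagonal (fun i => ((B * K)ᵀ * (B * K)) i i)) j j')) =
      ∫ ω, (x k ω) ⬝ᵥ (((A + B * K)ᵀ * (A + B * K) + ((1 - p) / p) •
      Matrix.diagonal (fun i => ((B * K)ᵀ * (B * K)) i i))).mulVec (x k ω) ∂μ := by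
    rw [integral_congr_ae (Filter.Eventually.of_forall hdoteq)]
    refine Eq.trans ?_ (integral_finset_sum _ (fun j _ => integrable_finset_sum _
      (fun j' _ => (hxint j j').mul_const _))).symm
    refine Finset.sum_congr rfl fun j _ => ?_
    refine Eq.trans ?_ (integral_finset_sum _ (fun j' _ => (hxint j j').mul_const _)).symm
    exact Finset.sum_congr rfl fun j' _ => (integral_mul_const _ _).symm
  -- Step G : final bound
  have hdot_integrable : Integrable (fun ω => (x k ω) ⬝ᵥ (((A + B * K)ᵀ * (A + B * K) + ((1 - p) / p) •
      Matrix.diagonal (fun i => ((B * K)ᵀ * (B * K)) i i))).mulVec (x k ω)) μ := by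
    apply (integrable_finset_sum Finset.univ (fun j (_ : j ∈ Finset.univ) =>
      integrable_finset_sum Finset.univ (fun j' (_ : j' ∈ Finset.univ) =>
        (hxint j j').mul_const ((((A + B * K)ᵀ * (A + B * K) + ((1 - p) / p) •
      Matrix.diagonal (fun i => ((B * K)ᵀ * (B * K)) i i))) j j')))).congr
    exact Filter.Eventually.of_forall fun ω => (hdoteq ω).symm
  have hsq_integrable : Integrable (fun ω => ∑ i, (x k ω i) ^ 2) μ := by
    apply integrable_finset_sum
    intro i _
    refine hInt _ (C * C) ((hxim k i).pow_const 2) (fun ω => ?_)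
    rw [sq, abs_mul]
    exact mul_le_mul (hC ω i) (hC ω i) (abs_nonneg _) hC0
  rw [hmain, hdotint_eq]
  calc (∫ ω, (x k ω) ⬝ᵥ (((A + B * K)ᵀ * (A + B * K) + ((1 - p) / p) •
      Matrix.diagonal (fun i => ((B * K)ᵀ * (B * K)) i i))).mulVec (x k ω) ∂μ)
      ≤ ∫ ω, specNorm (((A + B * K)ᵀ * (A + B * K) + ((1 - p) / p) •
      Matrix.diagonal (fun i => ((B * K)ᵀ * (B * K)) i i))) * ∑ i, (x k ω i) ^ 2 ∂μ :=
        integral_mono hdot_integrable (hsq_integrable.const_mul _)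
          (fun ω => quad_bound (((A + B * K)ᵀ * (A + B * K) + ((1 - p) / p) •
      Matrix.diagonal (fun i => ((B * K)ᵀ * (B * K)) i i))) (x k ω))
    _ = specNorm (((A + B * K)ᵀ * (A + B * K) + ((1 - p) / p) •
      Matrix.diagonal (fun i => ((B * K)ᵀ * (B * K)) i i))) * ∫ ω, ∑ i, (x k ω i) ^ 2 ∂μ := integral_const_mul _ _
end

section
/- Consider the closed-loop stochastic recursion x(k+1) = (A + B K C(k)) x(k) with deterministic initial condition x(0) = x₀ ∈ ℝⁿ, where C(k) = Diag(c₁(k)/p, …, cₙ(k)/p) and the family (cᵢ(k))_{k∈ℕ, 1≤i≤n} consists of mutually independent Bernoulli random variables each with parameter p ∈ (0,1]. Let f(p) := ‖(A+BK)ᵀ(A+BK) + ((1−p)/p) · Diag((BK)ᵀ(BK))‖₂. If f(p) < 1, then E[‖x(k)‖²] ≤ f(p)^k · ‖x₀‖² for all k ∈ ℕ, and in particular E[‖x(k)‖²] → 0 as k → ∞ for every initial condition x₀ (asymptotic mean-square stability). -/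
open MeasureTheory ProbabilityTheory Matrix Filter

lemma specNorm_nonneg {n : ℕ} (M : Matrix (Fin n) (Fin n) ℝ) : 0 ≤ specNorm M :=
  norm_nonneg _

lemma quad_le_specNorm {n : ℕ} (M : Matrix (Fin n) (Fin n) ℝ) (v : Fin n → ℝ) :
    v ⬝ᵥ M.mulVec v ≤ specNorm M * ∑ i, (v i)^2 := by
  set T := LinearMap.toContinuousLinearMap (Matrix.toEuclideanLin M) with hT
  set u : EuclideanSpace ℝ (Fin n) := (WithLp.equiv 2 (Fin n → ℝ)).symm v with hu
  have h1 : v ⬝ᵥ M.mulVec v = (inner ℝ u (T u) : ℝ) := by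
    simp only [hT, LinearMap.coe_toContinuousLinearMap', Matrix.toEuclideanLin_apply]
    simp [PiLp.inner_apply, dotProduct, hu, RCLike.inner_apply, mul_comm]
  have h2 : (inner ℝ u (T u) : ℝ) ≤ ‖u‖ * ‖T u‖ := real_inner_le_norm _ _
  have h3 : ‖T u‖ ≤ specNorm M * ‖u‖ := T.le_opNorm u
  have h4 : ‖u‖ * ‖u‖ = ∑ i, (v i)^2 := by
    rw [EuclideanSpace.norm_eq, Real.mul_self_sqrt (Finset.sum_nonneg fun i _ => sq_nonneg _)]
    simp [hu]
  calc v ⬝ᵥ M.mulVec v ≤ ‖u‖ * ‖T u‖ := h1 ▸ h2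
    _ ≤ ‖u‖ * (specNorm M * ‖u‖) := mul_le_mul_of_nonneg_left h3 (norm_nonneg _)
    _ = specNorm M * ∑ i, (v i)^2 := by rw [← h4]; ring

lemma dot_mulVec_expand {n : ℕ} (M : Matrix (Fin n) (Fin n) ℝ) (v : Fin n → ℝ) :
    v ⬝ᵥ M.mulVec v = ∑ a, ∑ b, v a * v b * M a b := by
  simp only [dotProduct, mulVec, Finset.mul_sum]
  exact Finset.sum_congr rfl fun a _ => Finset.sum_congr rfl fun b _ => by ring

lemma expand_sq {n : ℕ} (A G : Matrix (Fin n) (Fin n) ℝ) (d v : Fin n → ℝ) :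
    ∑ i, ((A + G * Matrix.diagonal d).mulVec v i)^2
      = ∑ a, ∑ b, v a * v b * ((Aᵀ*A) a b + d b * (Aᵀ*G) a b + d a * (Gᵀ*A) a b
          + d a * d b * (Gᵀ*G) a b) := by
  set N := A + G * Matrix.diagonal d with hN
  have h1 : ∑ i, (N.mulVec v i)^2 = v ⬝ᵥ (Nᵀ*N).mulVec v := by
    rw [← Matrix.mulVec_mulVec, Matrix.dotProduct_mulVec, Matrix.vecMul_transpose]
    simp [dotProduct, sq]
  have hNN : Nᵀ*N = Aᵀ*A + Aᵀ*G*Matrix.diagonal d + Matrix.diagonal d*(Gᵀ*A)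
      + Matrix.diagonal d*(Gᵀ*G)*Matrix.diagonal d := by
    simp only [hN, transpose_add, transpose_mul, diagonal_transpose]
    noncomm_ring
  rw [h1, hNN, dot_mulVec_expand]
  refine Finset.sum_congr rfl fun a _ => Finset.sum_congr rfl fun b _ => ?_
  simp only [Matrix.add_apply, Matrix.mul_diagonal, Matrix.diagonal_mul]
  ring

lemma integral_add4 {Ω : Type*} [MeasurableSpace Ω] {μ : MeasureTheory.Measure Ω}
    {g1 g2 g3 g4 : Ω → ℝ} (h1 : Integrable g1 μ) (h2 : Integrable g2 μ)
    (h3 : Integrable g3 μ) (h4 : Integrable g4 μ) :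
    ∫ ω, (g1 ω + g2 ω + g3 ω + g4 ω) ∂μ
      = (∫ ω, g1 ω ∂μ) + (∫ ω, g2 ω ∂μ) + (∫ ω, g3 ω ∂μ) + ∫ ω, g4 ω ∂μ := by
  have a12 : ∫ ω, (g1 ω + g2 ω) ∂μ = (∫ ω, g1 ω ∂μ) + ∫ ω, g2 ω ∂μ := integral_add h1 h2
  have a123 : ∫ ω, (g1 ω + g2 ω + g3 ω) ∂μ
      = (∫ ω, (g1 ω + g2 ω) ∂μ) + ∫ ω, g3 ω ∂μ := integral_add (h1.add h2) h3
  have a1234 : ∫ ω, (g1 ω + g2 ω + g3 ω + g4 ω) ∂μ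
      = (∫ ω, (g1 ω + g2 ω + g3 ω) ∂μ) + ∫ ω, g4 ω ∂μ := integral_add ((h1.add h2).add h3) h4
  rw [a1234, a123, a12]

/-- For the closed-loop stochastic recursion
`x(k+1) = (A + B K C(k)) x(k)` with `C(k) = Diag(c₁(k)/p, …, cₙ(k)/p)` built from mutually
independent Bernoulli(`p`) random variables, setting
`f(p) := ‖(A+BK)ᵀ(A+BK) + ((1−p)/p)·Diag((BK)ᵀ(BK))‖₂`, if `f(p) < 1` then
`E[‖x(k)‖²] ≤ f(p)^k · ‖x₀‖²` for all `k`, and `E[‖x(k)‖²] → 0` (AMSS). -/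
theorem amss_of_f_lt_one
    {n m : ℕ} (A : Matrix (Fin n) (Fin n) ℝ) (B : Matrix (Fin n) (Fin m) ℝ)
    (K : Matrix (Fin m) (Fin n) ℝ)
    {Ω : Type*} [MeasurableSpace Ω] (μ : Measure Ω) [IsProbabilityMeasure μ]
    (p : ℝ) (hp : p ∈ Set.Ioc (0 : ℝ) 1)
    (c : ℕ → Fin n → Ω → ℝ)
    (hmeas : ∀ k i, Measurable (c k i))
    (h01 : ∀ k i ω, c k i ω = 0 ∨ c k i ω = 1)
    (hber : ∀ k i, μ {ω | c k i ω = 1} = ENNReal.ofReal p)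
    (hindep : iIndepFun
      (fun (ki : ℕ × Fin n) ω => c ki.1 ki.2 ω) μ)
    (hf : specNorm ((A + B * K)ᵀ * (A + B * K) + ((1 - p) / p) •
        Matrix.diagonal (fun i => ((B * K)ᵀ * (B * K)) i i)) < 1)
    (x₀ : Fin n → ℝ) (x : ℕ → Ω → Fin n → ℝ)
    (hx0 : ∀ ω, x 0 ω = x₀)
    (hxrec : ∀ k ω, x (k + 1) ω =
      (A + B * K * Matrix.diagonal (fun i => c k i ω / p)).mulVec (x k ω)) :
    (∀ k, (∫ ω, ∑ i, (x k ω i) ^ 2 ∂μ) ≤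
        specNorm ((A + B * K)ᵀ * (A + B * K) + ((1 - p) / p) •
          Matrix.diagonal (fun i => ((B * K)ᵀ * (B * K)) i i)) ^ k * ∑ i, (x₀ i) ^ 2) ∧
      Tendsto (fun k => ∫ ω, ∑ i, (x k ω i) ^ 2 ∂μ) atTop (nhds 0) := by
  obtain ⟨hp0, hp1⟩ := hp
  have hpne : p ≠ 0 := ne_of_gt hp0
  set G := B * K with hG
  set Mm := (A + G)ᵀ * (A + G) + ((1 - p) / p) •
      Matrix.diagonal (fun i => (Gᵀ * G) i i) with hMm
  set f := specNorm Mm with hfdef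
  have hf0 : 0 ≤ f := specNorm_nonneg _
  -- basic bounds on c
  have cb : ∀ k i ω, |c k i ω| ≤ 1 := by
    intro k i ω; rcases h01 k i ω with h | h <;> simp [h]
  -- recursion in coordinates
  have hrec' : ∀ k ω i, x (k+1) ω i = ∑ j, (A i j + G i j * (c k j ω / p)) * x k ω j := by
    intro k ω i
    rw [hxrec]
    simp [Matrix.mulVec, dotProduct, Matrix.add_apply, Matrix.mul_diagonal]
  -- measurability of x
  have mx : ∀ k i, Measurable fun ω => x k ω i := by
    intro k
    induction k with
    | zero =>
      intro i
      have : (fun ω => x 0 ω i) = fun _ => x₀ i := funext fun ω => by rw [hx0]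
      rw [this]; exact measurable_const
    | succ k ih =>
      intro i
      have : (fun ω => x (k+1) ω i)
          = fun ω => ∑ j, (A i j + G i j * (c k j ω / p)) * x k ω j :=
        funext fun ω => hrec' k ω i
      rw [this]
      exact Finset.measurable_sum _ fun j _ =>
        ((measurable_const.add (((hmeas k j).div_const p).const_mul _)).mul (ih j))
  -- boundedness of x
  have bx : ∀ k, ∃ C, 0 ≤ C ∧ ∀ ω i, |x k ω i| ≤ C := by
    intro k
    induction k with
    | zero =>
      refine ⟨∑ j, |x₀ j|, Finset.sum_nonneg fun j _ => abs_nonneg _, fun ω i => ?_⟩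
      rw [hx0]
      exact Finset.single_le_sum (f := fun j => |x₀ j|) (fun j _ => abs_nonneg _)
        (Finset.mem_univ i)
    | succ k ih =>
      obtain ⟨C, hC0, hC⟩ := ih
      have hent : ∀ i j : Fin n, (0:ℝ) ≤ |A i j| + |G i j| / p := fun i j =>
        add_nonneg (abs_nonneg _) (div_nonneg (abs_nonneg _) hp0.le)
      refine ⟨(∑ i, ∑ j, (|A i j| + |G i j| / p)) * C, mul_nonneg
        (Finset.sum_nonneg fun i _ => Finset.sum_nonneg fun j _ => hent i j) hC0,
        fun ω i => ?_⟩
      rw [hrec' k ω i]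
      have habs : ∀ j, |A i j + G i j * (c k j ω / p)| ≤ |A i j| + |G i j| / p := by
        intro j
        refine (abs_add_le _ _).trans (add_le_add le_rfl ?_)
        rw [abs_mul, abs_div, abs_of_pos hp0]
        calc |G i j| * (|c k j ω| / p) ≤ |G i j| * (1 / p) := by
              gcongr; exact cb k j ω
          _ = |G i j| / p := by ring
      calc |∑ j, (A i j + G i j * (c k j ω / p)) * x k ω j|
          ≤ ∑ j, |(A i j + G i j * (c k j ω / p)) * x k ω j| :=
            Finset.abs_sum_le_sum_abs _ _
        _ ≤ ∑ j, (|A i j| + |G i j| / p) * C := by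
            refine Finset.sum_le_sum fun j _ => ?_
            rw [abs_mul]
            exact mul_le_mul (habs j) (hC ω j) (abs_nonneg _) (hent i j)
        _ = (∑ j, (|A i j| + |G i j| / p)) * C := by rw [Finset.sum_mul]
        _ ≤ (∑ i, ∑ j, (|A i j| + |G i j| / p)) * C := by
            refine mul_le_mul_of_nonneg_right ?_ hC0
            exact Finset.single_le_sum
              (f := fun i => ∑ j, (|A i j| + |G i j| / p))
              (fun i _ => Finset.sum_nonneg fun j _ => hent i j) (Finset.mem_univ i)
  -- integrability helper
  have intb : ∀ (g : Ω → ℝ), Measurable g → ∀ C : ℝ, (∀ ω, |g ω| ≤ C) → Integrable g μ := by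
    intro g hg C hC
    exact (integrable_const C).mono' hg.aestronglyMeasurable
      (ae_of_all _ fun ω => by simpa [Real.norm_eq_abs] using hC ω)
  -- representation of x k as measurable function of past c's
  let S : ℕ → Finset (ℕ × Fin n) := fun k => Finset.range k ×ˢ Finset.univ
  have rep : ∀ k, ∃ ψ : ({a // a ∈ S k} → ℝ) → (Fin n → ℝ),
      Measurable ψ ∧ ∀ ω, x k ω = ψ (fun s => c s.1.1 s.1.2 ω) := by
    intro k
    induction k with
    | zero => exact ⟨fun _ => x₀, measurable_const, fun ω => hx0 ω⟩
    | succ k ih =>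
      obtain ⟨ψ, hψm, hψ⟩ := ih
      have hsub : ∀ s : {a // a ∈ S k}, (s : ℕ × Fin n) ∈ S (k+1) := by
        intro s
        have h := s.2
        simp only [S, Finset.mem_product, Finset.mem_range] at h ⊢
        exact ⟨Nat.lt_succ_of_lt h.1, h.2⟩
      have hmemk : ∀ j : Fin n, ((k, j) : ℕ × Fin n) ∈ S (k+1) := by
        intro j
        simp [S, Finset.mem_product, Finset.mem_range]
      refine ⟨fun v i => ∑ j, (A i j + G i j * (v ⟨(k, j), hmemk j⟩ / p)) *
          ψ (fun s => v ⟨s.1, hsub s⟩) j, ?_, ?_⟩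
      · apply measurable_pi_lambda
        intro i
        apply Finset.measurable_sum
        intro j _
        have hr : Measurable fun v : ({a // a ∈ S (k+1)} → ℝ) =>
            ψ (fun s => v ⟨s.1, hsub s⟩) j :=
          (measurable_pi_apply j).comp (hψm.comp
            (measurable_pi_lambda _ fun s => measurable_pi_apply _))
        exact (measurable_const.add (((measurable_pi_apply _).div_const p).const_mul _)).mul hr
      · intro ω
        funext i
        rw [hrec' k ω i]
        refine Finset.sum_congr rfl fun j _ => ?_
        rw [hψ ω]
  -- independence of (c k ·) and x k
  have hYX : ∀ k, IndepFun (fun ω (i : Fin n) => c k i ω) (x k) μ := by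
    intro k
    obtain ⟨ψ, hψm, hψ⟩ := rep k
    have hdisj : Disjoint (({k} ×ˢ Finset.univ : Finset (ℕ × Fin n))) (S k) := by
      rw [Finset.disjoint_left]
      intro a ha hb
      simp only [Finset.mem_product, Finset.mem_singleton] at ha
      simp only [S, Finset.mem_product, Finset.mem_range] at hb
      exact absurd hb.1 (by rw [ha.1]; exact lt_irrefl k)
    have hbase := hindep.indepFun_finset ({k} ×ˢ Finset.univ) (S k) hdisj
      (fun ki => hmeas ki.1 ki.2)
    have hφ : Measurable fun v : ({a // a ∈ ({k} ×ˢ Finset.univ : Finset (ℕ × Fin n))} → ℝ) =>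
        (fun i => v ⟨(k, i), Finset.mem_product.mpr
          ⟨Finset.mem_singleton_self k, Finset.mem_univ i⟩⟩ : Fin n → ℝ) :=
      measurable_pi_lambda _ fun i => measurable_pi_apply _
    have h := hbase.comp hφ hψm
    have e1 : ((fun v : ({a // a ∈ ({k} ×ˢ Finset.univ : Finset (ℕ × Fin n))} → ℝ) =>
        (fun i => v ⟨(k, i), Finset.mem_product.mpr
          ⟨Finset.mem_singleton_self k, Finset.mem_univ i⟩⟩ : Fin n → ℝ)) ∘
        (fun ω (s : {a // a ∈ ({k} ×ˢ Finset.univ : Finset (ℕ × Fin n))}) => c s.1.1 s.1.2 ω))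
        = fun ω (i : Fin n) => c k i ω := rfl
    have e2 : (ψ ∘ fun ω (s : {a // a ∈ S k}) => c s.1.1 s.1.2 ω) = x k :=
      funext fun ω => (hψ ω).symm
    rwa [e1, e2] at h
  -- expectations of c
  have hEc : ∀ k i, ∫ ω, c k i ω ∂μ = p := by
    intro k i
    have hs : MeasurableSet {ω | c k i ω = 1} := (hmeas k i) (measurableSet_singleton 1)
    have hind : (fun ω => c k i ω) = Set.indicator {ω | c k i ω = 1} (fun _ => (1:ℝ)) := by
      funext ω
      by_cases hmem : ω ∈ {ω | c k i ω = 1}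
      · rw [Set.indicator_of_mem hmem]; exact hmem
      · rw [Set.indicator_of_notMem hmem]
        rcases h01 k i ω with h | h
        · exact h
        · exact absurd h hmem
    rw [hind, integral_indicator_const _ hs, measureReal_def, hber, smul_eq_mul, mul_one,
      ENNReal.toReal_ofReal hp0.le]
  have hintc : ∀ k i, Integrable (fun ω => c k i ω) μ := fun k i =>
    intb _ (hmeas k i) 1 (cb k i)
  have hEcc : ∀ k (a b : Fin n), ∫ ω, c k a ω * c k b ω ∂μ = if a = b then p else p * p := by
    intro k a b
    by_cases hab : a = b
    · subst hab
      simp only [if_pos rfl]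
      have h : (fun ω => c k a ω * c k a ω) = fun ω => c k a ω :=
        funext fun ω => by rcases h01 k a ω with h | h <;> simp [h]
      calc ∫ ω, c k a ω * c k a ω ∂μ = ∫ ω, c k a ω ∂μ := by rw [h]
        _ = p := hEc k a
    · simp only [if_neg hab]
      have hne : ((k, a) : ℕ × Fin n) ≠ (k, b) := by
        simp [Prod.ext_iff, hab]
      have hind : IndepFun (c k a) (c k b) μ := hindep.indepFun hne
      calc ∫ ω, c k a ω * c k b ω ∂μ = integral μ (c k a * c k b) := rfl
        _ = (∫ ω, c k a ω ∂μ) * ∫ ω, c k b ω ∂μ :=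
            hind.integral_mul_eq_mul_integral (hintc k a).1 (hintc k b).1
        _ = p * p := by rw [hEc, hEc]
  -- one-step bound
  have hstep : ∀ k, (∫ ω, ∑ i, (x (k+1) ω i)^2 ∂μ) ≤ f * ∫ ω, ∑ i, (x k ω i)^2 ∂μ := by
    intro k
    obtain ⟨C, hC0, hC⟩ := bx k
    have mxx : ∀ a b : Fin n, Measurable fun ω => x k ω a * x k ω b :=
      fun a b => (mx k a).mul (mx k b)
    have xxb : ∀ (a b : Fin n) ω, |x k ω a * x k ω b| ≤ C * C := fun a b ω => by
      rw [abs_mul]; exact mul_le_mul (hC ω a) (hC ω b) (abs_nonneg _) hC0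
    have ixx : ∀ a b : Fin n, Integrable (fun ω => x k ω a * x k ω b) μ :=
      fun a b => intb _ (mxx a b) (C * C) (xxb a b)
    have mcd : ∀ i, Measurable fun ω => c k i ω / p := fun i => (hmeas k i).div_const p
    have cdb : ∀ i ω, |c k i ω / p| ≤ 1 / p := by
      intro i ω
      rw [abs_div, abs_of_pos hp0]
      gcongr
      exact cb k i ω
    have ind1 : ∀ a b j : Fin n,
        IndepFun (fun ω => c k j ω / p) (fun ω => x k ω a * x k ω b) μ := by
      intro a b j
      exact (hYX k).comp (φ := fun w : Fin n → ℝ => w j / p)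
        (ψ := fun w : Fin n → ℝ => w a * w b)
        (show Measurable (fun w : Fin n → ℝ => w j / p) by fun_prop)
        (show Measurable (fun w : Fin n → ℝ => w a * w b) from
          (measurable_pi_apply a).mul (measurable_pi_apply b))
    have ind2 : ∀ a b i j : Fin n,
        IndepFun (fun ω => (c k i ω / p) * (c k j ω / p))
          (fun ω => x k ω a * x k ω b) μ := by
      intro a b i j
      exact (hYX k).comp (φ := fun w : Fin n → ℝ => (w i / p) * (w j / p))
        (ψ := fun w : Fin n → ℝ => w a * w b)
        (show Measurable (fun w : Fin n → ℝ => (w i / p) * (w j / p)) by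
          fun_prop)
        (show Measurable (fun w : Fin n → ℝ => w a * w b) from
          (measurable_pi_apply a).mul (measurable_pi_apply b))
    have Ed : ∀ j, ∫ ω, c k j ω / p ∂μ = 1 := by
      intro j; rw [integral_div, hEc k j, div_self hpne]
    have Edd : ∀ i j : Fin n,
        ∫ ω, (c k i ω / p) * (c k j ω / p) ∂μ = if i = j then 1 / p else 1 := by
      intro i j
      have h : (fun ω => (c k i ω / p) * (c k j ω / p))
          = fun ω => (c k i ω * c k j ω) / (p * p) :=
        funext fun ω => div_mul_div_comm _ _ _ _
      rw [h, integral_div, hEcc]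
      by_cases hij : i = j
      · simp only [if_pos hij]
        field_simp
      · simp only [if_neg hij]
        field_simp
    have idx : ∀ a b j : Fin n,
        Integrable (fun ω => (c k j ω / p) * (x k ω a * x k ω b)) μ := by
      intro a b j
      refine intb _ ((mcd j).mul (mxx a b)) ((1/p) * (C * C)) fun ω => ?_
      rw [abs_mul]
      exact mul_le_mul (cdb j ω) (xxb a b ω) (abs_nonneg _) (by positivity)
    have iddx : ∀ a b i j : Fin n,
        Integrable (fun ω => ((c k i ω / p) * (c k j ω / p)) * (x k ω a * x k ω b)) μ := by
      intro a b i j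
      refine intb _ (((mcd i).mul (mcd j)).mul (mxx a b)) ((1/p * (1/p)) * (C * C)) fun ω => ?_
      rw [abs_mul, abs_mul]
      refine mul_le_mul (mul_le_mul (cdb i ω) (cdb j ω) (abs_nonneg _) (by positivity))
        (xxb a b ω) (abs_nonneg _) (by positivity)
    -- factorizations
    have Fd : ∀ a b j : Fin n,
        ∫ ω, (c k j ω / p) * (x k ω a * x k ω b) ∂μ = ∫ ω, x k ω a * x k ω b ∂μ := by
      intro a b j
      calc ∫ ω, (c k j ω / p) * (x k ω a * x k ω b) ∂μ
          = integral μ ((fun ω => c k j ω / p) * fun ω => x k ω a * x k ω b) := rfl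
        _ = (∫ ω, c k j ω / p ∂μ) * ∫ ω, x k ω a * x k ω b ∂μ :=
            (ind1 a b j).integral_mul_eq_mul_integral
              (intb _ (mcd j) (1/p) (cdb j)).1 (ixx a b).1
        _ = ∫ ω, x k ω a * x k ω b ∂μ := by rw [Ed j, one_mul]
    have Fdd : ∀ a b : Fin n,
        ∫ ω, (c k a ω / p) * (c k b ω / p) * (x k ω a * x k ω b) ∂μ
          = (if a = b then 1 / p else 1) * ∫ ω, x k ω a * x k ω b ∂μ := by
      intro a b
      calc ∫ ω, (c k a ω / p) * (c k b ω / p) * (x k ω a * x k ω b) ∂μ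
          = integral μ ((fun ω => (c k a ω / p) * (c k b ω / p)) *
              fun ω => x k ω a * x k ω b) := rfl
        _ = (∫ ω, (c k a ω / p) * (c k b ω / p) ∂μ) * ∫ ω, x k ω a * x k ω b ∂μ :=
            (ind2 a b a b).integral_mul_eq_mul_integral
              (intb _ ((mcd a).mul (mcd b)) (1/p * (1/p)) fun ω => by
                rw [Pi.mul_apply, abs_mul]
                exact mul_le_mul (cdb a ω) (cdb b ω) (abs_nonneg _) (by positivity)).1
              (ixx a b).1
        _ = (if a = b then 1 / p else 1) * ∫ ω, x k ω a * x k ω b ∂μ := by rw [Edd]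
    -- rewrite of integrand
    have e : ∀ a b : Fin n, (fun ω => x k ω a * x k ω b *
          ((Aᵀ*A) a b + (c k b ω / p) * (Aᵀ*G) a b + (c k a ω / p) * (Gᵀ*A) a b
            + (c k a ω / p) * (c k b ω / p) * (Gᵀ*G) a b))
        = fun ω => (x k ω a * x k ω b) * (Aᵀ*A) a b
            + ((c k b ω / p) * (x k ω a * x k ω b)) * (Aᵀ*G) a b
            + ((c k a ω / p) * (x k ω a * x k ω b)) * (Gᵀ*A) a b
            + ((c k a ω / p) * (c k b ω / p) * (x k ω a * x k ω b)) * (Gᵀ*G) a b :=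
      fun a b => funext fun ω => by ring
    have igrand : ∀ a b : Fin n, Integrable (fun ω => x k ω a * x k ω b *
        ((Aᵀ*A) a b + (c k b ω / p) * (Aᵀ*G) a b + (c k a ω / p) * (Gᵀ*A) a b
          + (c k a ω / p) * (c k b ω / p) * (Gᵀ*G) a b)) μ := by
      intro a b
      rw [e a b]
      exact ((((ixx a b).mul_const _).add ((idx a b b).mul_const _)).add
        ((idx a b a).mul_const _)).add ((iddx a b a b).mul_const _)
    have hexp : ∀ a b : Fin n, ((A+G)ᵀ*(A+G)) a b
        = (Aᵀ*A) a b + (Aᵀ*G) a b + (Gᵀ*A) a b + (Gᵀ*G) a b := by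
      intro a b
      have h : (A+G)ᵀ*(A+G) = Aᵀ*A + Aᵀ*G + Gᵀ*A + Gᵀ*G := by
        rw [transpose_add]; noncomm_ring
      rw [h]
      simp [Matrix.add_apply]
    have per : ∀ a b : Fin n, ∫ ω, x k ω a * x k ω b *
        ((Aᵀ*A) a b + (c k b ω / p) * (Aᵀ*G) a b + (c k a ω / p) * (Gᵀ*A) a b
          + (c k a ω / p) * (c k b ω / p) * (Gᵀ*G) a b) ∂μ
        = (∫ ω, x k ω a * x k ω b ∂μ) * Mm a b := by
      intro a b
      have it1 : Integrable (fun ω => (x k ω a * x k ω b) * (Aᵀ*A) a b) μ :=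
        (ixx a b).mul_const _
      have it2 : Integrable (fun ω => (c k b ω / p) * (x k ω a * x k ω b) * (Aᵀ*G) a b) μ :=
        (idx a b b).mul_const _
      have it3 : Integrable (fun ω => (c k a ω / p) * (x k ω a * x k ω b) * (Gᵀ*A) a b) μ :=
        (idx a b a).mul_const _
      have it4 : Integrable (fun ω => (c k a ω / p) * (c k b ω / p) * (x k ω a * x k ω b)
          * (Gᵀ*G) a b) μ := (iddx a b a b).mul_const _
      have split : ∫ ω, ((x k ω a * x k ω b) * (Aᵀ*A) a b
            + (c k b ω / p) * (x k ω a * x k ω b) * (Aᵀ*G) a b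
            + (c k a ω / p) * (x k ω a * x k ω b) * (Gᵀ*A) a b
            + (c k a ω / p) * (c k b ω / p) * (x k ω a * x k ω b) * (Gᵀ*G) a b) ∂μ
          = (∫ ω, (x k ω a * x k ω b) * (Aᵀ*A) a b ∂μ)
            + (∫ ω, (c k b ω / p) * (x k ω a * x k ω b) * (Aᵀ*G) a b ∂μ)
            + (∫ ω, (c k a ω / p) * (x k ω a * x k ω b) * (Gᵀ*A) a b ∂μ)
            + ∫ ω, (c k a ω / p) * (c k b ω / p) * (x k ω a * x k ω b) * (Gᵀ*G) a b ∂μ :=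
        integral_add4 it1 it2 it3 it4
      have e' : (fun ω => x k ω a * x k ω b *
            ((Aᵀ*A) a b + (c k b ω / p) * (Aᵀ*G) a b + (c k a ω / p) * (Gᵀ*A) a b
              + (c k a ω / p) * (c k b ω / p) * (Gᵀ*G) a b))
          = fun ω => (x k ω a * x k ω b) * (Aᵀ*A) a b
            + (c k b ω / p) * (x k ω a * x k ω b) * (Aᵀ*G) a b
            + (c k a ω / p) * (x k ω a * x k ω b) * (Gᵀ*A) a b
            + (c k a ω / p) * (c k b ω / p) * (x k ω a * x k ω b) * (Gᵀ*G) a b :=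
        funext fun ω => by ring
      rw [e', split, integral_mul_const, integral_mul_const, integral_mul_const,
        integral_mul_const, Fd a b b, Fd a b a, Fdd a b]
      rw [hMm]
      simp only [Matrix.add_apply, Matrix.smul_apply, Matrix.diagonal_apply, smul_eq_mul,
        hexp a b]
      by_cases hab : a = b
      · subst hab
        simp only [if_pos rfl]
        simp only [eq_self_iff_true, ↓reduceIte]
        field_simp
        ring
      · simp only [if_neg hab]
        ring
    have hd : (fun ω => (x k ω) ⬝ᵥ Mm.mulVec (x k ω))
        = fun ω => ∑ a, ∑ b, (x k ω a * x k ω b) * Mm a b :=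
      funext fun ω => dot_mulVec_expand Mm (x k ω)
    have iL : Integrable (fun ω => (x k ω) ⬝ᵥ Mm.mulVec (x k ω)) μ := by
      rw [hd]
      exact integrable_finset_sum _ fun a _ =>
        integrable_finset_sum _ fun b _ => (ixx a b).mul_const _
    have isq : Integrable (fun ω => ∑ i, (x k ω i)^2) μ := by
      have h : (fun ω => ∑ i, (x k ω i)^2) = fun ω => ∑ i, x k ω i * x k ω i :=
        funext fun ω => by simp [pow_two]
      rw [h]
      exact integrable_finset_sum _ fun i _ => ixx i i
    have hback : ∫ ω, (x k ω) ⬝ᵥ Mm.mulVec (x k ω) ∂μ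
        = ∑ a, ∑ b, (∫ ω, x k ω a * x k ω b ∂μ) * Mm a b := by
      rw [hd, integral_finset_sum _ (fun a _ =>
        integrable_finset_sum _ fun b _ => (ixx a b).mul_const (Mm a b))]
      refine Finset.sum_congr rfl fun a _ => ?_
      rw [integral_finset_sum _ (fun b _ => (ixx a b).mul_const (Mm a b))]
      exact Finset.sum_congr rfl fun b _ => integral_mul_const _ _
    calc ∫ ω, ∑ i, (x (k+1) ω i)^2 ∂μ
        = ∫ ω, ∑ a, ∑ b, x k ω a * x k ω b *
            ((Aᵀ*A) a b + (c k b ω / p) * (Aᵀ*G) a b + (c k a ω / p) * (Gᵀ*A) a b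
              + (c k a ω / p) * (c k b ω / p) * (Gᵀ*G) a b) ∂μ := by
          have h : (fun ω => ∑ i, (x (k+1) ω i)^2)
              = fun ω => ∑ a, ∑ b, x k ω a * x k ω b *
                ((Aᵀ*A) a b + (c k b ω / p) * (Aᵀ*G) a b + (c k a ω / p) * (Gᵀ*A) a b
                  + (c k a ω / p) * (c k b ω / p) * (Gᵀ*G) a b) := by
            funext ω
            rw [hxrec k ω]
            exact expand_sq A G _ (x k ω)
          rw [h]
      _ = ∑ a, ∑ b, ∫ ω, x k ω a * x k ω b *
            ((Aᵀ*A) a b + (c k b ω / p) * (Aᵀ*G) a b + (c k a ω / p) * (Gᵀ*A) a b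
              + (c k a ω / p) * (c k b ω / p) * (Gᵀ*G) a b) ∂μ := by
          rw [integral_finset_sum _ (fun a _ => integrable_finset_sum _ fun b _ => igrand a b)]
          exact Finset.sum_congr rfl fun a _ => integral_finset_sum _ fun b _ => igrand a b
      _ = ∑ a, ∑ b, (∫ ω, x k ω a * x k ω b ∂μ) * Mm a b :=
          Finset.sum_congr rfl fun a _ => Finset.sum_congr rfl fun b _ => per a b
      _ = ∫ ω, (x k ω) ⬝ᵥ Mm.mulVec (x k ω) ∂μ := hback.symm
      _ ≤ ∫ ω, f * ∑ i, (x k ω i)^2 ∂μ :=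
          integral_mono iL (isq.const_mul f) fun ω => quad_le_specNorm Mm (x k ω)
      _ = f * ∫ ω, ∑ i, (x k ω i)^2 ∂μ := integral_const_mul f _
  -- main bound
  have hmain : ∀ k, (∫ ω, ∑ i, (x k ω i)^2 ∂μ) ≤ f ^ k * ∑ i, (x₀ i)^2 := by
    intro k
    induction k with
    | zero =>
      have h : (fun ω => ∑ i, (x 0 ω i)^2) = fun _ : Ω => ∑ i, (x₀ i)^2 :=
        funext fun ω => by rw [hx0]
      rw [h, integral_const]
      simp
    | succ k ih =>
      calc ∫ ω, ∑ i, (x (k+1) ω i)^2 ∂μ ≤ f * ∫ ω, ∑ i, (x k ω i)^2 ∂μ := hstep k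
        _ ≤ f * (f ^ k * ∑ i, (x₀ i)^2) := mul_le_mul_of_nonneg_left ih hf0
        _ = f ^ (k+1) * ∑ i, (x₀ i)^2 := by ring
  refine ⟨hmain, ?_⟩
  have h0 : ∀ k, 0 ≤ ∫ ω, ∑ i, (x k ω i)^2 ∂μ := fun k =>
    integral_nonneg fun ω => Finset.sum_nonneg fun i _ => sq_nonneg _
  have ht : Tendsto (fun k => f ^ k * ∑ i, (x₀ i)^2) atTop (nhds 0) := by
    have h := (tendsto_pow_atTop_nhds_zero_of_lt_one hf0 hf).mul_const (∑ i, (x₀ i)^2)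
    simpa using h
  exact tendsto_of_tendsto_of_tendsto_of_le_of_le tendsto_const_nhds ht h0 hmain
end

section
/- Let A ∈ ℝ^{n×n}, B ∈ ℝ^{n×m}, K ∈ ℝ^{m×n}, D := A + B K, L := B K, and for p ∈ (0,1] define f(p) := ‖Dᵀ D + ((1−p)/p) · Diag(Lᵀ L)‖₂ (spectral norm). If ‖A + B K‖₂ < 1 (equivalently, the spectral radius of (A+BK)ᵀ(A+BK) is strictly less than 1), then there exists p ∈ (0,1) such that f(p) < 1. -/
open Matrix

open scoped Matrix.Norms.L2Operator

lemma specNorm_eq {n : ℕ} (M : Matrix (Fin n) (Fin n) ℝ) : specNorm M = ‖M‖ :=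
  (Matrix.l2_opNorm_def M).symm

/-- With `D := A + B K`, `L := B K` and
`f(p) := ‖Dᵀ D + ((1−p)/p)·Diag(Lᵀ L)‖₂`, if `‖A + B K‖₂ < 1` then there exists
`p ∈ (0,1)` with `f(p) < 1`. -/
theorem exists_p_f_lt_one
    {n m : ℕ} (A : Matrix (Fin n) (Fin n) ℝ) (B : Matrix (Fin n) (Fin m) ℝ)
    (K : Matrix (Fin m) (Fin n) ℝ)
    (h : specNorm (A + B * K) < 1) :
    ∃ p ∈ Set.Ioo (0 : ℝ) 1,
      specNorm ((A + B * K)ᵀ * (A + B * K) + ((1 - p) / p) •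
        Matrix.diagonal (fun i => ((B * K)ᵀ * (B * K)) i i)) < 1 := by
  rw [specNorm_eq] at h
  set D := A + B * K with hD
  set E : Matrix (Fin n) (Fin n) ℝ :=
    Matrix.diagonal (fun i => ((B * K)ᵀ * (B * K)) i i) with hE
  have hnD : (0:ℝ) ≤ ‖D‖ := norm_nonneg _
  have hDD : ‖Dᵀ * D‖ < 1 := by
    rw [← Matrix.conjTranspose_eq_transpose_of_trivial,
      Matrix.l2_opNorm_conjTranspose_mul_self]
    nlinarith
  have hEpos : (0:ℝ) < ‖E‖ + 1 := by positivity
  set c : ℝ := min 1 ((1 - ‖Dᵀ * D‖) / (2 * (‖E‖ + 1))) with hc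
  have hc0 : 0 < c := lt_min one_pos (div_pos (by linarith) (by positivity))
  have hc1 : c ≤ 1 := min_le_left _ _
  refine ⟨1 / (1 + c), ⟨by positivity, by
    rw [div_lt_one (by linarith)]; linarith⟩, ?_⟩
  have hp : (1 - 1 / (1 + c)) / (1 / (1 + c)) = c := by
    field_simp
    ring
  rw [specNorm_eq, hp]
  calc ‖Dᵀ * D + c • E‖ ≤ ‖Dᵀ * D‖ + ‖c • E‖ := norm_add_le _ _
    _ = ‖Dᵀ * D‖ + c * ‖E‖ := by
        rw [norm_smul, Real.norm_eq_abs, abs_of_pos hc0]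
    _ < 1 := by
        have hr := min_le_right 1 ((1 - ‖Dᵀ * D‖) / (2 * (‖E‖ + 1)))
        have hE0 : (0:ℝ) ≤ ‖E‖ := norm_nonneg _
        have h2 : c * (‖E‖ + 1) ≤ (1 - ‖Dᵀ * D‖) / 2 := by
          have : ((1 - ‖Dᵀ * D‖) / (2 * (‖E‖ + 1))) * (‖E‖ + 1)
              = (1 - ‖Dᵀ * D‖) / 2 := by field_simp
          nlinarith
        nlinarith
end

section
/- Consider the closed-loop stochastic recursion x(k+1) = (A + B K C(k)) x(k) with deterministic initial condition x(0) = x₀ ∈ ℝⁿ, where C(k) = Diag(c₁(k)/p, …, cₙ(k)/p) and the family (cᵢ(k))_{k∈ℕ, 1≤i≤n} consists of mutually independent Bernoulli random variables each with parameter p ∈ (0,1]. Let D := A + B K, L := B K, sᵢ := Σ_{k=1}^{n} L_{k,i}², and s_max := max(s₁,…,sₙ). Assume ‖D‖₂ < 1 and s_max > 0, and assume p > 1/(1 + (1 − ‖D‖₂²)/s_max). Then the closed-loop system is asymptotically mean-square stable: E[‖x(k)‖²] → 0 as k → ∞ for every initial condition x₀ ∈ ℝⁿ. -/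
open MeasureTheory ProbabilityTheory Matrix Filter

lemma euclid_norm_sq {n : ℕ} (v : Fin n → ℝ) :
    ‖(WithLp.equiv 2 (Fin n → ℝ)).symm v‖ ^ 2 = ∑ i, v i ^ 2 := by
  rw [EuclideanSpace.norm_eq, Real.sq_sqrt (by positivity)]
  simp [sq_abs]

lemma mulVec_sq_le {n : ℕ} (M : Matrix (Fin n) (Fin n) ℝ) (v : Fin n → ℝ) :
    ∑ r, (M.mulVec v r) ^ 2 ≤ specNorm M ^ 2 * ∑ i, v i ^ 2 := by
  have h := (LinearMap.toContinuousLinearMap (Matrix.toEuclideanLin M)).le_opNorm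
    ((WithLp.equiv 2 (Fin n → ℝ)).symm v)
  have happ : (LinearMap.toContinuousLinearMap (Matrix.toEuclideanLin M))
      ((WithLp.equiv 2 (Fin n → ℝ)).symm v)
      = (WithLp.equiv 2 (Fin n → ℝ)).symm (M.mulVec v) := by
    simp
  rw [happ] at h
  have h2 : ‖(WithLp.equiv 2 (Fin n → ℝ)).symm (M.mulVec v)‖ ^ 2
      ≤ (specNorm M * ‖(WithLp.equiv 2 (Fin n → ℝ)).symm v‖) ^ 2 := by
    apply pow_le_pow_left₀ (norm_nonneg _) h
  rw [euclid_norm_sq, mul_pow, euclid_norm_sq] at h2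
  exact h2

lemma bern_exp {Ω : Type*} [MeasurableSpace Ω] (μ : Measure Ω) [IsProbabilityMeasure μ]
    {f : Ω → ℝ} (hm : Measurable f) (h01 : ∀ ω, f ω = 0 ∨ f ω = 1)
    {p : ℝ} (hp0 : 0 ≤ p) (hp1 : p ≤ 1) (hb : μ {ω | f ω = 1} = ENNReal.ofReal p)
    (g : ℝ → ℝ) :
    ∫ ω, g (f ω) ∂μ = p * g 1 + (1 - p) * g 0 := by
  have hEm : MeasurableSet {ω | f ω = 1} := hm (measurableSet_singleton 1)
  have hpt : (fun ω => g (f ω)) = fun ω => {ω | f ω = 1}.indicator (fun _ => g 1) ω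
      + {ω | f ω = 1}ᶜ.indicator (fun _ => g 0) ω := by
    funext ω
    rcases h01 ω with h | h
    · have hne : ω ∉ {ω | f ω = 1} := by simp [h]
      simp [Set.indicator, hne, h]
    · have hmem : ω ∈ {ω | f ω = 1} := h
      simp [Set.indicator, hmem, h]
  have hcompl : μ ({ω | f ω = 1}ᶜ) = ENNReal.ofReal (1 - p) := by
    rw [measure_compl hEm (measure_ne_top _ _), measure_univ, hb,
      ← ENNReal.ofReal_one, ← ENNReal.ofReal_sub _ hp0]
  rw [hpt, integral_add ((integrable_const _).indicator hEm)
      ((integrable_const _).indicator hEm.compl),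
    integral_indicator_const _ hEm, integral_indicator_const _ hEm.compl, measureReal_def, measureReal_def, hb, hcompl,
    ENNReal.toReal_ofReal hp0, ENNReal.toReal_ofReal (by linarith)]
  simp [smul_eq_mul]

noncomputable def phiAux {n m : ℕ} (A : Matrix (Fin n) (Fin n) ℝ) (B : Matrix (Fin n) (Fin m) ℝ)
    (K : Matrix (Fin m) (Fin n) ℝ) (p : ℝ) (x₀ : Fin n → ℝ) :
    ℕ → ((ℕ × Fin n) → ℝ) → Fin n → ℝ
  | 0, _ => x₀
  | (k+1), f => (A + B * K * Matrix.diagonal (fun i => f (k, i) / p)).mulVec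
      (phiAux A B K p x₀ k f)

lemma phiAux_congr {n m : ℕ} (A : Matrix (Fin n) (Fin n) ℝ) (B : Matrix (Fin n) (Fin m) ℝ)
    (K : Matrix (Fin m) (Fin n) ℝ) (p : ℝ) (x₀ : Fin n → ℝ) (k : ℕ)
    {f g : (ℕ × Fin n) → ℝ} (h : ∀ s : ℕ × Fin n, s.1 < k → f s = g s) :
    phiAux A B K p x₀ k f = phiAux A B K p x₀ k g := by
  induction k with
  | zero => rfl
  | succ k ih =>
    have h1 : ∀ s : ℕ × Fin n, s.1 < k → f s = g s := fun s hs => h s (hs.trans (Nat.lt_succ_self k))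
    have h2 : (fun i => f (k, i) / p) = fun i => g (k, i) / p :=
      funext fun i => by rw [h (k, i) (Nat.lt_succ_self k)]
    simp only [phiAux, ih h1, h2]

lemma phiAux_measurable {n m : ℕ} (A : Matrix (Fin n) (Fin n) ℝ) (B : Matrix (Fin n) (Fin m) ℝ)
    (K : Matrix (Fin m) (Fin n) ℝ) (p : ℝ) (x₀ : Fin n → ℝ) (k : ℕ) :
    Measurable (phiAux A B K p x₀ k) := by
  induction k with
  | zero => exact measurable_const
  | succ k ih =>
    rw [measurable_pi_iff]
    intro i
    have : (fun f => phiAux A B K p x₀ (k+1) f i)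
        = fun f => ∑ j, (A i j + (B*K) i j * (f (k, j) / p)) * phiAux A B K p x₀ k f j := by
      funext f
      simp [phiAux, Matrix.mulVec, dotProduct, Matrix.add_apply, Matrix.mul_diagonal]
    rw [this]
    apply Finset.measurable_sum
    intro j _
    apply Measurable.mul
    · fun_prop
    · exact (measurable_pi_apply j).comp ih

lemma indep_x_c {n m : ℕ} (A : Matrix (Fin n) (Fin n) ℝ) (B : Matrix (Fin n) (Fin m) ℝ)
    (K : Matrix (Fin m) (Fin n) ℝ)
    {Ω : Type*} [MeasurableSpace Ω] (μ : Measure Ω)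
    (p : ℝ) (c : ℕ → Fin n → Ω → ℝ)
    (hmeas : ∀ k i, Measurable (c k i))
    (hindep : iIndepFun
      (fun (ki : ℕ × Fin n) ω => c ki.1 ki.2 ω) μ)
    (x₀ : Fin n → ℝ) (x : ℕ → Ω → Fin n → ℝ)
    (hx0 : ∀ ω, x 0 ω = x₀)
    (hxrec : ∀ k ω, x (k + 1) ω =
      (A + B * K * Matrix.diagonal (fun i => c k i ω / p)).mulVec (x k ω)) (k : ℕ) :
    IndepFun (fun ω => x k ω) (fun ω (i : Fin n) => c k i ω) μ := by
  have hrep : ∀ k ω, x k ω = phiAux A B K p x₀ k (fun s => c s.1 s.2 ω) := by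
    intro k
    induction k with
    | zero => intro ω; rw [hx0]; rfl
    | succ k ih => intro ω; rw [hxrec, ih]; rfl
  set S : Finset (ℕ × Fin n) := Finset.range k ×ˢ (Finset.univ : Finset (Fin n)) with hS
  set T : Finset (ℕ × Fin n) := {k} ×ˢ (Finset.univ : Finset (Fin n)) with hT
  have hST : Disjoint S T := by
    rw [Finset.disjoint_left]
    intro s hs ht
    simp only [hS, hT, Finset.mem_product, Finset.mem_range, Finset.mem_singleton] at hs ht
    omega
  have hblocks := hindep.indepFun_finset S T hST (fun ki => hmeas ki.1 ki.2)
  set gS : (S → ℝ) → (Fin n → ℝ) :=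
    fun v => phiAux A B K p x₀ k (fun s => if h : s ∈ S then v ⟨s, h⟩ else 0) with hgSdef
  have hmemT : ∀ i : Fin n, ((k, i) : ℕ × Fin n) ∈ T := by
    intro i; simp [hT, Finset.mem_product]
  set gT : (T → ℝ) → (Fin n → ℝ) := fun v i => v ⟨(k, i), hmemT i⟩ with hgTdef
  have hgS : Measurable gS := by
    apply (phiAux_measurable A B K p x₀ k).comp
    apply measurable_pi_lambda
    intro s
    by_cases h : s ∈ S
    · simp only [h, dif_pos]; exact measurable_pi_apply _
    · simp only [h, dif_neg, not_false_iff]; exact measurable_const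
  have hgT : Measurable gT := measurable_pi_lambda _ fun i => measurable_pi_apply _
  have hcomp := hblocks.comp hgS hgT
  have e1 : gS ∘ (fun a (i : S) => c (i : ℕ × Fin n).1 (i : ℕ × Fin n).2 a) = fun ω => x k ω := by
    funext ω
    simp only [Function.comp_apply, hgSdef]
    rw [hrep k ω]
    apply phiAux_congr
    intro s hs
    have hsS : s ∈ S := by simp [hS, Finset.mem_product, Finset.mem_range, hs]
    simp only [hsS, dif_pos]
  have e2 : gT ∘ (fun a (i : T) => c (i : ℕ × Fin n).1 (i : ℕ × Fin n).2 a)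
      = fun ω (i : Fin n) => c k i ω := by
    funext ω i
    simp [hgTdef]
  rw [e1, e2] at hcomp
  exact hcomp



/-- For the closed-loop stochastic recursion
`x(k+1) = (A + B K C(k)) x(k)` with `C(k) = Diag(c₁(k)/p, …, cₙ(k)/p)` built from
mutually independent Bernoulli(`p`) random variables, with `D := A + B K`, `L := B K`,
`sᵢ := Σₖ L_{k,i}²`, `s_max := max(s₁,…,sₙ)`: if `‖D‖₂ < 1`, `s_max > 0` and
`p > 1/(1 + (1 − ‖D‖₂²)/s_max)`, then the closed-loop system is asymptotically
mean-square stable: `E[‖x(k)‖²] → 0` for every initial condition `x₀`. -/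
theorem amss_of_p_gt
    {n m : ℕ} (A : Matrix (Fin n) (Fin n) ℝ) (B : Matrix (Fin n) (Fin m) ℝ)
    (K : Matrix (Fin m) (Fin n) ℝ)
    {Ω : Type*} [MeasurableSpace Ω] (μ : Measure Ω) [IsProbabilityMeasure μ]
    (p : ℝ) (hp : p ∈ Set.Ioc (0 : ℝ) 1)
    (c : ℕ → Fin n → Ω → ℝ)
    (hmeas : ∀ k i, Measurable (c k i))
    (h01 : ∀ k i ω, c k i ω = 0 ∨ c k i ω = 1)
    (hber : ∀ k i, μ {ω | c k i ω = 1} = ENNReal.ofReal p)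
    (hindep : iIndepFun
      (fun (ki : ℕ × Fin n) ω => c ki.1 ki.2 ω) μ)
    (smax : ℝ)
    (hsmax : IsGreatest (Set.range fun i => ∑ k, ((B * K) k i) ^ 2) smax)
    (hD : specNorm (A + B * K) < 1) (hs : 0 < smax)
    (hpgt : p > 1 / (1 + (1 - specNorm (A + B * K) ^ 2) / smax))
    (x₀ : Fin n → ℝ) (x : ℕ → Ω → Fin n → ℝ)
    (hx0 : ∀ ω, x 0 ω = x₀)
    (hxrec : ∀ k ω, x (k + 1) ω =
      (A + B * K * Matrix.diagonal (fun i => c k i ω / p)).mulVec (x k ω)) :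
    Tendsto (fun k => ∫ ω, ∑ i, (x k ω i) ^ 2 ∂μ) atTop (nhds 0) := by
  obtain ⟨hp0, hp1⟩ := hp
  have hpne : p ≠ 0 := ne_of_gt hp0
  have hσ0 : 0 ≤ specNorm (A + B * K) := specNorm_nonneg _
  have hq0 : (0:ℝ) ≤ (1 - p) / p := div_nonneg (by linarith) hp0.le
  -- measurability of x
  have hxm : ∀ k, Measurable (fun ω => x k ω) := by
    intro k
    have hrep : ∀ ω, x k ω = phiAux A B K p x₀ k (fun s => c s.1 s.2 ω) := by
      induction k with
      | zero => intro ω; rw [hx0]; rfl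
      | succ k ih => intro ω; rw [hxrec, ih]; rfl
    have : (fun ω => x k ω)
        = (phiAux A B K p x₀ k) ∘ (fun ω (s : ℕ × Fin n) => c s.1 s.2 ω) := funext hrep
    rw [this]
    exact (phiAux_measurable A B K p x₀ k).comp
      (measurable_pi_lambda _ fun s => hmeas s.1 s.2)
  have hxmi : ∀ k i, Measurable (fun ω => x k ω i) :=
    fun k i => (measurable_pi_apply i).comp (hxm k)
  -- boundedness of x
  have hbd : ∀ k, ∃ C, 0 ≤ C ∧ ∀ ω i, |x k ω i| ≤ C := by
    intro k
    induction k with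
    | zero =>
      refine ⟨∑ i, |x₀ i|, Finset.sum_nonneg fun i _ => abs_nonneg _, fun ω i => ?_⟩
      rw [hx0]
      exact Finset.single_le_sum (fun i _ => abs_nonneg (x₀ i)) (Finset.mem_univ i)
    | succ k ih =>
      obtain ⟨C, hC0, hCb⟩ := ih
      have ha0 : (0:ℝ) ≤ ∑ i, ∑ j, (|A i j| + |(B*K) i j| / p) :=
        Finset.sum_nonneg fun i _ => Finset.sum_nonneg fun j _ => by positivity
      refine ⟨(∑ i, ∑ j, (|A i j| + |(B*K) i j| / p)) * C, mul_nonneg ha0 hC0, fun ω i => ?_⟩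
      rw [hxrec]
      simp only [Matrix.mulVec, dotProduct, Matrix.add_apply, Matrix.mul_diagonal]
      calc |∑ j, (A i j + (B*K) i j * (c k j ω / p)) * x k ω j|
          ≤ ∑ j, |(A i j + (B*K) i j * (c k j ω / p)) * x k ω j| :=
            Finset.abs_sum_le_sum_abs _ _
        _ ≤ ∑ j, (|A i j| + |(B*K) i j| / p) * C := by
            apply Finset.sum_le_sum
            intro j _
            rw [abs_mul]
            apply mul_le_mul _ (hCb ω j) (abs_nonneg _) (by positivity)
            calc |A i j + (B*K) i j * (c k j ω / p)|
                ≤ |A i j| + |(B*K) i j * (c k j ω / p)| := abs_add_le _ _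
              _ ≤ |A i j| + |(B*K) i j| / p := by
                  rw [abs_mul]
                  have hcb : |c k j ω / p| ≤ 1 / p := by
                    rcases h01 k j ω with h | h <;> rw [h]
                    · simp
                      positivity
                    · rw [abs_div, abs_of_pos hp0, abs_one]
                  have h2 := mul_le_mul_of_nonneg_left hcb (abs_nonneg ((B*K) i j))
                  rw [mul_one_div] at h2
                  linarith
        _ = (∑ j, (|A i j| + |(B*K) i j| / p)) * C := by rw [Finset.sum_mul]
        _ ≤ (∑ i, ∑ j, (|A i j| + |(B*K) i j| / p)) * C := by
            apply mul_le_mul_of_nonneg_right _ hC0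
            exact Finset.single_le_sum
              (f := fun i => ∑ j, (|A i j| + |(B*K) i j| / p))
              (fun i _ => Finset.sum_nonneg fun j _ => by positivity) (Finset.mem_univ i)
  -- integrability helper
  have hIB : ∀ (f : Ω → ℝ) (C : ℝ), Measurable f → (∀ ω, |f ω| ≤ C) → Integrable f μ :=
    fun f C hm hC => ⟨hm.aestronglyMeasurable,
      HasFiniteIntegral.of_bounded (C := C) (ae_of_all _ fun ω => by simpa using hC ω)⟩
  have hmulbd : ∀ {f g : Ω → ℝ} {Cf Cg : ℝ}, (∀ ω, |f ω| ≤ Cf) → (∀ ω, |g ω| ≤ Cg) →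
      ∀ ω, |f ω * g ω| ≤ Cf * Cg := by
    intro f g Cf Cg hf hg ω
    rw [abs_mul]
    exact mul_le_mul (hf ω) (hg ω) (abs_nonneg _) ((abs_nonneg _).trans (hf ω))
  -- bounds for the bernoulli deviations
  have hdbd : ∀ k i ω, |c k i ω / p - 1| ≤ 1 / p + 1 := by
    intro k i ω
    rcases h01 k i ω with h | h <;> rw [h]
    · simp
      positivity
    · calc |1 / p - 1| ≤ |1/p| + 1 := by
            simpa using abs_sub (1/p) 1
        _ = 1/p + 1 := by rw [abs_of_pos (by positivity)]
  have hdm : ∀ k i, Measurable (fun ω => c k i ω / p - 1) :=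
    fun k i => ((hmeas k i).div_const p).sub measurable_const
  have hdInt : ∀ k i, Integrable (fun ω => c k i ω / p - 1) μ :=
    fun k i => hIB _ _ (hdm k i) (hdbd k i)
  -- bernoulli moments
  have hEd : ∀ k i, ∫ ω, (c k i ω / p - 1) ∂μ = 0 := by
    intro k i
    have h := bern_exp μ (hmeas k i) (h01 k i) hp0.le hp1 (hber k i) (fun t => t / p - 1)
    rw [h]
    field_simp
    ring
  have hEd2 : ∀ k i, ∫ ω, (c k i ω / p - 1) * (c k i ω / p - 1) ∂μ = (1 - p) / p := by
    intro k i
    have h := bern_exp μ (hmeas k i) (h01 k i) hp0.le hp1 (hber k i)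
      (fun t => (t / p - 1) * (t / p - 1))
    rw [h]
    field_simp
    ring
  have hEdd : ∀ k (i j : Fin n), i ≠ j →
      ∫ ω, (c k i ω / p - 1) * (c k j ω / p - 1) ∂μ = 0 := by
    intro k i j hij
    have hne : ((k, i) : ℕ × Fin n) ≠ (k, j) := by simp [Prod.ext_iff, hij]
    have hi2 := hindep.indepFun hne
    have hcomp := hi2.comp (φ := fun t : ℝ => t / p - 1) (ψ := fun t : ℝ => t / p - 1)
      ((measurable_id.div_const p).sub measurable_const)
      ((measurable_id.div_const p).sub measurable_const)
    have h := IndepFun.integral_mul_eq_mul_integral hcomp (hdInt k i).aestronglyMeasurable (hdInt k j).aestronglyMeasurable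
    have e : (fun ω => (c k i ω / p - 1) * (c k j ω / p - 1))
        = ((fun t : ℝ => t / p - 1) ∘ (fun ω => c k i ω)) *
          ((fun t : ℝ => t / p - 1) ∘ (fun ω => c k j ω)) := rfl
    calc ∫ ω, (c k i ω / p - 1) * (c k j ω / p - 1) ∂μ
        = integral μ (((fun t : ℝ => t / p - 1) ∘ (fun ω => c k i ω)) *
          ((fun t : ℝ => t / p - 1) ∘ (fun ω => c k j ω))) := by rw [← e]
      _ = 0 := by
          rw [h]
          have : integral μ ((fun t : ℝ => t / p - 1) ∘ (fun ω => c k i ω))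
              = ∫ ω, (c k i ω / p - 1) ∂μ := rfl
          rw [this, hEd k i, zero_mul]
  -- independence factorization
  have hfact : ∀ (k : ℕ) (g h : (Fin n → ℝ) → ℝ), Measurable g → Measurable h →
      Integrable (fun ω => g (x k ω)) μ → Integrable (fun ω => h (fun i => c k i ω)) μ →
      ∫ ω, g (x k ω) * h (fun i => c k i ω) ∂μ
        = (∫ ω, g (x k ω) ∂μ) * ∫ ω, h (fun i => c k i ω) ∂μ := by
    intro k g h hg hh hgi hhi
    have hi := (indep_x_c A B K μ p c hmeas hindep x₀ x hx0 hxrec k).comp hg hh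
    exact IndepFun.integral_mul_eq_mul_integral hi hgi.aestronglyMeasurable hhi.aestronglyMeasurable
  -- the key one-step inequality
  have key : ∀ k, ∫ ω, ∑ i, (x (k+1) ω i) ^ 2 ∂μ
      ≤ (specNorm (A + B * K) ^ 2 + (1 - p) / p * smax) * ∫ ω, ∑ i, (x k ω i) ^ 2 ∂μ := by
    intro k
    obtain ⟨C, hC0, hCb⟩ := hbd k
    have hx1 : ∀ ω r, x (k+1) ω r
        = (A + B*K).mulVec (x k ω) r + ∑ i, (B*K) r i * ((c k i ω / p - 1) * x k ω i) := by
      intro ω r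
      rw [hxrec k ω]
      simp only [Matrix.mulVec, dotProduct, Matrix.add_apply, Matrix.mul_diagonal]
      rw [← Finset.sum_add_distrib]
      apply Finset.sum_congr rfl
      intro j _
      ring
    have hpoint : ∀ ω, ∑ r, (x (k+1) ω r) ^ 2
        = (∑ r, ((A + B*K).mulVec (x k ω) r) ^ 2)
        + (∑ r, ∑ i, (2 * (B*K) r i)
            * (((A + B*K).mulVec (x k ω) r * x k ω i) * (c k i ω / p - 1)))
        + (∑ r, ∑ i, ∑ j, ((B*K) r i * (B*K) r j)
            * ((x k ω i * x k ω j) * ((c k i ω / p - 1) * (c k j ω / p - 1)))) := by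
      intro ω
      rw [← Finset.sum_add_distrib, ← Finset.sum_add_distrib]
      apply Finset.sum_congr rfl
      intro r _
      have ht2 : (∑ i, (B*K) r i * ((c k i ω / p - 1) * x k ω i)) ^ 2
          = ∑ i, ∑ j, ((B*K) r i * (B*K) r j)
              * ((x k ω i * x k ω j) * ((c k i ω / p - 1) * (c k j ω / p - 1))) := by
        rw [sq, Finset.sum_mul_sum]
        exact Finset.sum_congr rfl fun i _ => Finset.sum_congr rfl fun j _ => by ring
      have ht1 : 2 * ((A + B*K).mulVec (x k ω) r)
            * (∑ i, (B*K) r i * ((c k i ω / p - 1) * x k ω i))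
          = ∑ i, (2 * (B*K) r i)
              * (((A + B*K).mulVec (x k ω) r * x k ω i) * (c k i ω / p - 1)) := by
        rw [Finset.mul_sum]
        exact Finset.sum_congr rfl fun i _ => by ring
      rw [hx1 ω r, add_sq, ht1, ht2]
    have ham : ∀ r, Measurable (fun ω => (A + B*K).mulVec (x k ω) r) := by
      intro r
      simp only [Matrix.mulVec, dotProduct]
      exact Finset.measurable_sum _ fun j _ => (hxmi k j).const_mul _
    have haBd : ∀ ω r, |(A + B*K).mulVec (x k ω) r| ≤ (∑ j, |(A + B*K) r j|) * C := by
      intro ω r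
      simp only [Matrix.mulVec, dotProduct]
      calc |∑ j, (A + B*K) r j * x k ω j| ≤ ∑ j, |(A + B*K) r j * x k ω j| :=
            Finset.abs_sum_le_sum_abs _ _
        _ ≤ ∑ j, |(A + B*K) r j| * C := Finset.sum_le_sum fun j _ => by
            rw [abs_mul]; exact mul_le_mul_of_nonneg_left (hCb ω j) (abs_nonneg _)
        _ = (∑ j, |(A + B*K) r j|) * C := by rw [Finset.sum_mul]
    have hIa2 : ∀ r, Integrable (fun ω => ((A + B*K).mulVec (x k ω) r) ^ 2) μ := by
      intro r
      apply hIB _ (((∑ j, |(A + B*K) r j|) * C) ^ 2) ((ham r).pow_const 2)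
      intro ω
      rw [abs_pow]
      exact pow_le_pow_left₀ (abs_nonneg _) (haBd ω r) 2
    have hImid : ∀ r i, Integrable
        (fun ω => ((A + B*K).mulVec (x k ω) r * x k ω i) * (c k i ω / p - 1)) μ := by
      intro r i
      apply hIB _ ((((∑ j, |(A + B*K) r j|) * C) * C) * (1/p + 1))
        (((ham r).mul (hxmi k i)).mul (hdm k i))
      exact hmulbd (hmulbd (fun ω => haBd ω r) (fun ω => hCb ω i)) (hdbd k i)
    have hIlast : ∀ i j, Integrable
        (fun ω => (x k ω i * x k ω j) * ((c k i ω / p - 1) * (c k j ω / p - 1))) μ := by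
      intro i j
      apply hIB _ ((C * C) * ((1/p + 1) * (1/p + 1)))
        (((hxmi k i).mul (hxmi k j)).mul ((hdm k i).mul (hdm k j)))
      exact hmulbd (hmulbd (fun ω => hCb ω i) (fun ω => hCb ω j))
        (hmulbd (hdbd k i) (hdbd k j))
    have hIyi2 : ∀ i, Integrable (fun ω => (x k ω i) ^ 2) μ := by
      intro i
      apply hIB _ (C ^ 2) ((hxmi k i).pow_const 2)
      intro ω
      rw [abs_pow]
      exact pow_le_pow_left₀ (abs_nonneg _) (hCb ω i) 2
    have hIS1 : Integrable (fun ω => ∑ r, ((A + B*K).mulVec (x k ω) r) ^ 2) μ :=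
      integrable_finset_sum _ fun r _ => hIa2 r
    have hIS2 : Integrable (fun ω => ∑ r, ∑ i, (2 * (B*K) r i)
        * (((A + B*K).mulVec (x k ω) r * x k ω i) * (c k i ω / p - 1))) μ :=
      integrable_finset_sum _ fun r _ => integrable_finset_sum _ fun i _ =>
        (hImid r i).const_mul _
    have hIS3 : Integrable (fun ω => ∑ r, ∑ i, ∑ j, ((B*K) r i * (B*K) r j)
        * ((x k ω i * x k ω j) * ((c k i ω / p - 1) * (c k j ω / p - 1)))) μ :=
      integrable_finset_sum _ fun r _ => integrable_finset_sum _ fun i _ =>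
        integrable_finset_sum _ fun j _ => (hIlast i j).const_mul _
    have hIsum : Integrable (fun ω => ∑ i, (x k ω i) ^ 2) μ :=
      integrable_finset_sum _ fun i _ => hIyi2 i
    have hsplit : ∫ ω, ∑ i, (x (k+1) ω i) ^ 2 ∂μ
        = (∫ ω, ∑ r, ((A + B*K).mulVec (x k ω) r) ^ 2 ∂μ)
        + (∫ ω, ∑ r, ∑ i, (2 * (B*K) r i)
            * (((A + B*K).mulVec (x k ω) r * x k ω i) * (c k i ω / p - 1)) ∂μ)
        + (∫ ω, ∑ r, ∑ i, ∑ j, ((B*K) r i * (B*K) r j)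
            * ((x k ω i * x k ω j) * ((c k i ω / p - 1) * (c k j ω / p - 1))) ∂μ) := by
      rw [show (fun ω => ∑ i, (x (k+1) ω i) ^ 2)
        = fun ω => (∑ r, ((A + B*K).mulVec (x k ω) r) ^ 2)
          + (∑ r, ∑ i, (2 * (B*K) r i)
              * (((A + B*K).mulVec (x k ω) r * x k ω i) * (c k i ω / p - 1)))
          + (∑ r, ∑ i, ∑ j, ((B*K) r i * (B*K) r j)
              * ((x k ω i * x k ω j) * ((c k i ω / p - 1) * (c k j ω / p - 1))))
        from funext hpoint]
      have hadd : Integrable (fun ω => (∑ r, ((A + B*K).mulVec (x k ω) r) ^ 2)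
          + (∑ r, ∑ i, (2 * (B*K) r i)
              * (((A + B*K).mulVec (x k ω) r * x k ω i) * (c k i ω / p - 1)))) μ :=
        hIS1.add hIS2
      rw [integral_add hadd hIS3, integral_add hIS1 hIS2]
    have hS2 : (∫ ω, ∑ r, ∑ i, (2 * (B*K) r i)
        * (((A + B*K).mulVec (x k ω) r * x k ω i) * (c k i ω / p - 1)) ∂μ) = 0 := by
      rw [integral_finset_sum _ fun r _ => integrable_finset_sum _ fun i _ =>
        (hImid r i).const_mul _]
      apply Finset.sum_eq_zero
      intro r _
      rw [integral_finset_sum _ fun i _ => (hImid r i).const_mul _]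
      apply Finset.sum_eq_zero
      intro i _
      rw [integral_const_mul]
      have hg : Measurable (fun v : Fin n → ℝ => (A + B*K).mulVec v r * v i) := by
        simp only [Matrix.mulVec, dotProduct]
        exact (Finset.measurable_sum _ fun j _ =>
          (measurable_pi_apply j).const_mul _).mul (measurable_pi_apply i)
      have hh : Measurable (fun w : Fin n → ℝ => w i / p - 1) := by
        fun_prop
      have hgint : Integrable (fun ω =>
          (fun v : Fin n → ℝ => (A + B*K).mulVec v r * v i) (x k ω)) μ := by
        simp only
        exact hIB _ (((∑ j, |(A + B*K) r j|) * C) * C) ((ham r).mul (hxmi k i))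
          (hmulbd (fun ω => haBd ω r) (fun ω => hCb ω i))
      have hhint : Integrable (fun ω =>
          (fun w : Fin n → ℝ => w i / p - 1) (fun i' => c k i' ω)) μ := by
        simp only
        exact hdInt k i
      have h := hfact k _ _ hg hh hgint hhint
      simp only at h
      rw [h, hEd k i, mul_zero, mul_zero]
    have hterm : ∀ i j, ∫ ω, (x k ω i * x k ω j)
        * ((c k i ω / p - 1) * (c k j ω / p - 1)) ∂μ
        = (∫ ω, x k ω i * x k ω j ∂μ)
          * ∫ ω, (c k i ω / p - 1) * (c k j ω / p - 1) ∂μ := by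
      intro i j
      have hg : Measurable (fun v : Fin n → ℝ => v i * v j) :=
        (measurable_pi_apply i).mul (measurable_pi_apply j)
      have hh : Measurable (fun w : Fin n → ℝ => (w i / p - 1) * (w j / p - 1)) := by
        fun_prop
      have hgint : Integrable (fun ω => (fun v : Fin n → ℝ => v i * v j) (x k ω)) μ := by
        simp only
        exact hIB _ (C * C) ((hxmi k i).mul (hxmi k j))
          (hmulbd (fun ω => hCb ω i) (fun ω => hCb ω j))
      have hhint : Integrable (fun ω =>
          (fun w : Fin n → ℝ => (w i / p - 1) * (w j / p - 1)) (fun i' => c k i' ω)) μ := by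
        simp only
        exact hIB _ ((1/p+1) * (1/p+1)) ((hdm k i).mul (hdm k j))
          (hmulbd (hdbd k i) (hdbd k j))
      have h := hfact k _ _ hg hh hgint hhint
      simp only at h
      exact h
    have hS3 : (∫ ω, ∑ r, ∑ i, ∑ j, ((B*K) r i * (B*K) r j)
        * ((x k ω i * x k ω j) * ((c k i ω / p - 1) * (c k j ω / p - 1))) ∂μ)
        = (1 - p) / p * ∑ i, (∑ r, ((B*K) r i) ^ 2) * ∫ ω, (x k ω i) ^ 2 ∂μ := by
      rw [integral_finset_sum _ fun r _ => integrable_finset_sum _ fun i _ =>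
        integrable_finset_sum _ fun j _ => (hIlast i j).const_mul _]
      have hrow : ∀ r : Fin n, (∫ ω, (∑ i, ∑ j, ((B*K) r i * (B*K) r j)
          * ((x k ω i * x k ω j) * ((c k i ω / p - 1) * (c k j ω / p - 1)))) ∂μ)
          = ∑ i, ((B*K) r i) ^ 2 * ((1 - p) / p * ∫ ω, (x k ω i) ^ 2 ∂μ) := by
        intro r
        rw [integral_finset_sum _ fun i _ => integrable_finset_sum _ fun j _ =>
          (hIlast i j).const_mul _]
        apply Finset.sum_congr rfl
        intro i _
        rw [integral_finset_sum _ fun j _ => (hIlast i j).const_mul _]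
        rw [Finset.sum_eq_single i]
        · rw [integral_const_mul, hterm i i, hEd2 k i]
          have hsq : ∫ ω, x k ω i * x k ω i ∂μ = ∫ ω, (x k ω i) ^ 2 ∂μ := by
            apply integral_congr_ae
            filter_upwards with ω
            ring
          rw [hsq]
          ring
        · intro j _ hji
          rw [integral_const_mul, hterm i j, hEdd k i j (Ne.symm hji), mul_zero, mul_zero]
        · intro h
          exact absurd (Finset.mem_univ i) h
      rw [Finset.sum_congr rfl fun r _ => hrow r, Finset.sum_comm, Finset.mul_sum]
      apply Finset.sum_congr rfl
      intro i _
      rw [← Finset.sum_mul]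
      ring
    have hS1le : (∫ ω, ∑ r, ((A + B*K).mulVec (x k ω) r) ^ 2 ∂μ)
        ≤ specNorm (A + B * K) ^ 2 * ∫ ω, ∑ i, (x k ω i) ^ 2 ∂μ := by
      have h1 : (∫ ω, ∑ r, ((A + B*K).mulVec (x k ω) r) ^ 2 ∂μ)
          ≤ ∫ ω, specNorm (A + B * K) ^ 2 * ∑ i, (x k ω i) ^ 2 ∂μ :=
        integral_mono hIS1 (hIsum.const_mul _) fun ω => mulVec_sq_le (A + B*K) (x k ω)
      rwa [integral_const_mul] at h1
    have hE0 : ∀ i, (0:ℝ) ≤ ∫ ω, (x k ω i) ^ 2 ∂μ :=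
      fun i => integral_nonneg fun ω => sq_nonneg _
    have hIk : ∫ ω, ∑ i, (x k ω i) ^ 2 ∂μ = ∑ i, ∫ ω, (x k ω i) ^ 2 ∂μ :=
      integral_finset_sum _ fun i _ => hIyi2 i
    have hsle : ∑ i, (∑ r, ((B*K) r i) ^ 2) * (∫ ω, (x k ω i) ^ 2 ∂μ)
        ≤ smax * ∫ ω, ∑ i, (x k ω i) ^ 2 ∂μ := by
      rw [hIk, Finset.mul_sum]
      apply Finset.sum_le_sum
      intro i _
      exact mul_le_mul_of_nonneg_right (hsmax.2 ⟨i, rfl⟩) (hE0 i)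
    have h3 : (1 - p) / p * ∑ i, (∑ r, ((B*K) r i) ^ 2) * (∫ ω, (x k ω i) ^ 2 ∂μ)
        ≤ (1 - p) / p * (smax * ∫ ω, ∑ i, (x k ω i) ^ 2 ∂μ) :=
      mul_le_mul_of_nonneg_left hsle hq0
    rw [hsplit, hS2, hS3, add_zero]
    have hrr : (specNorm (A + B * K) ^ 2 + (1 - p) / p * smax)
          * ∫ ω, ∑ i, (x k ω i) ^ 2 ∂μ
        = specNorm (A + B * K) ^ 2 * (∫ ω, ∑ i, (x k ω i) ^ 2 ∂μ)
          + (1 - p) / p * (smax * ∫ ω, ∑ i, (x k ω i) ^ 2 ∂μ) := by ring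
    linarith [hS1le]
  -- contraction factor is in [0, 1)
  have hσlt : specNorm (A + B * K) ^ 2 < 1 := pow_lt_one₀ hσ0 hD two_ne_zero
  have hQpos : (0:ℝ) < 1 + (1 - specNorm (A + B * K) ^ 2) / smax := by
    have h1 : (0:ℝ) < 1 - specNorm (A + B * K) ^ 2 := by linarith
    positivity
  have h1 : 1 < p * (1 + (1 - specNorm (A + B * K) ^ 2) / smax) := (div_lt_iff₀ hQpos).mp hpgt
  have hinvp : 1 / p < 1 + (1 - specNorm (A + B * K) ^ 2) / smax := by
    rw [div_lt_iff₀ hp0]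
    linarith [h1]
  have h2 : (1 - p) / p < (1 - specNorm (A + B * K) ^ 2) / smax := by
    have he : (1 - p) / p = 1 / p - 1 := by field_simp
    rw [he]
    linarith
  have h3 : (1 - p) / p * smax < 1 - specNorm (A + B * K) ^ 2 := by
    have := mul_lt_mul_of_pos_right h2 hs
    rwa [div_mul_cancel₀ _ (ne_of_gt hs)] at this
  have hρ1 : specNorm (A + B * K) ^ 2 + (1 - p) / p * smax < 1 := by linarith
  have hρ0 : (0:ℝ) ≤ specNorm (A + B * K) ^ 2 + (1 - p) / p * smax := by
    have := mul_nonneg hq0 hs.le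
    have := sq_nonneg (specNorm (A + B * K))
    linarith
  -- iterate and squeeze
  have hnn : ∀ k, (0:ℝ) ≤ ∫ ω, ∑ i, (x k ω i) ^ 2 ∂μ :=
    fun k => integral_nonneg fun ω => Finset.sum_nonneg fun i _ => sq_nonneg _
  have hiter : ∀ k, ∫ ω, ∑ i, (x k ω i) ^ 2 ∂μ
      ≤ (specNorm (A + B * K) ^ 2 + (1 - p) / p * smax) ^ k
        * ∫ ω, ∑ i, (x 0 ω i) ^ 2 ∂μ := by
    intro k
    induction k with
    | zero => simp
    | succ k ih =>
      calc ∫ ω, ∑ i, (x (k+1) ω i) ^ 2 ∂μ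
          ≤ (specNorm (A + B * K) ^ 2 + (1 - p) / p * smax)
            * ∫ ω, ∑ i, (x k ω i) ^ 2 ∂μ := key k
        _ ≤ (specNorm (A + B * K) ^ 2 + (1 - p) / p * smax)
            * ((specNorm (A + B * K) ^ 2 + (1 - p) / p * smax) ^ k
              * ∫ ω, ∑ i, (x 0 ω i) ^ 2 ∂μ) := mul_le_mul_of_nonneg_left ih hρ0
        _ = (specNorm (A + B * K) ^ 2 + (1 - p) / p * smax) ^ (k+1)
            * ∫ ω, ∑ i, (x 0 ω i) ^ 2 ∂μ := by ring
  have htend : Tendsto (fun k => (specNorm (A + B * K) ^ 2 + (1 - p) / p * smax) ^ k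
      * ∫ ω, ∑ i, (x 0 ω i) ^ 2 ∂μ) atTop (nhds 0) := by
    have := (tendsto_pow_atTop_nhds_zero_of_lt_one hρ0 hρ1).mul_const
      (∫ ω, ∑ i, (x 0 ω i) ^ 2 ∂μ)
    rwa [zero_mul] at this
  exact squeeze_zero hnn hiter htend
end

section
/- Consider the closed-loop stochastic recursion x(k+1) = (A + B K C(k)) x(k) with deterministic initial condition x(0) = x₀ ∈ ℝⁿ, where C(k) = Diag(c₁(k)/p₁, …, cₙ(k)/pₙ) and the family (cᵢ(k))_{k∈ℕ, 1≤i≤n} consists of mutually independent Bernoulli random variables with parameters pᵢ ∈ (0,1]. Let D := A + B K, L := B K, sᵢ := Σ_{k=1}^{n} L_{k,i}², and define g(p₁,…,pₙ) := ‖Dᵀ D + Diag(−s₁ + s₁/p₁, …, −sₙ + sₙ/pₙ)‖₂. Then for every k ∈ ℕ, E[‖x(k+1)‖²] ≤ g(p₁,…,pₙ) · E[‖x(k)‖²]. -/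
open MeasureTheory ProbabilityTheory Matrix Filter

lemma sum_sq_expand {n : ℕ} (E L : Fin n → Fin n → ℝ) (F y : Fin n → ℝ) :
    ∑ i, (∑ j, (E i j + L i j * F j) * y j)^2
      = ∑ j, ∑ j', ((∑ i, E i j * E i j') * (y j * y j')
          + (∑ i, E i j * L i j') * (F j' * (y j * y j'))
          + (∑ i, L i j * E i j') * (F j * (y j * y j'))
          + (∑ i, L i j * L i j') * ((F j * F j') * (y j * y j'))) := by
  have h1 : ∀ i : Fin n, (∑ j, (E i j + L i j * F j) * y j)^2
      = ∑ j, ∑ j', ((E i j + L i j * F j) * y j) * ((E i j' + L i j' * F j') * y j') := by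
    intro i; rw [pow_two, Finset.sum_mul_sum]
  simp_rw [h1]
  rw [Finset.sum_comm]
  refine Finset.sum_congr rfl fun j _ => ?_
  rw [Finset.sum_comm]
  refine Finset.sum_congr rfl fun j' _ => ?_
  simp only [Finset.sum_mul, Finset.mul_sum, ← Finset.sum_add_distrib]
  exact Finset.sum_congr rfl fun i _ => by ring

lemma quad_bound_s13 {n : ℕ} (M : Matrix (Fin n) (Fin n) ℝ) (y : Fin n → ℝ) :
    ∑ j, ∑ j', M j j' * (y j * y j') ≤ specNorm M * ∑ j, (y j)^2 := by
  set v : EuclideanSpace ℝ (Fin n) := (WithLp.equiv 2 (Fin n → ℝ)).symm y with hv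
  have hMv : Matrix.toEuclideanLin M v = (WithLp.equiv 2 (Fin n → ℝ)).symm (M.mulVec y) :=
    Matrix.toEuclideanLin_apply_piLp_toLp M y
  have hinner : ∑ j, ∑ j', M j j' * (y j * y j')
      = inner ℝ v (Matrix.toEuclideanLin M v) := by
    rw [hMv, PiLp.inner_apply]
    simp only [RCLike.inner_apply, conj_trivial]
    refine Finset.sum_congr rfl fun j _ => ?_
    show ∑ j', M j j' * (y j * y j') = (M.mulVec y) j * y j
    rw [Matrix.mulVec, dotProduct, Finset.sum_mul]
    exact Finset.sum_congr rfl fun j' _ => by ring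
  have hnormsq : (∑ j, (y j)^2) = ‖v‖ * ‖v‖ := by
    rw [← real_inner_self_eq_norm_mul_norm, PiLp.inner_apply]
    simp only [RCLike.inner_apply, conj_trivial]
    exact Finset.sum_congr rfl fun j _ => by rw [pow_two]; rfl
  rw [hinner, hnormsq]
  calc inner ℝ v (Matrix.toEuclideanLin M v)
      ≤ ‖v‖ * ‖Matrix.toEuclideanLin M v‖ := real_inner_le_norm _ _
    _ ≤ ‖v‖ * (specNorm M * ‖v‖) := by
        refine mul_le_mul_of_nonneg_left ?_ (norm_nonneg _)
        exact (LinearMap.toContinuousLinearMap (Matrix.toEuclideanLin M)).le_opNorm v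
    _ = specNorm M * (‖v‖ * ‖v‖) := by ring

/-- For the closed-loop stochastic recursion
`x(k+1) = (A + B K C(k)) x(k)` with `C(k) = Diag(c₁(k)/p₁, …, cₙ(k)/pₙ)` built from
mutually independent Bernoulli random variables with parameters `pᵢ ∈ (0,1]`, with
`D := A + B K`, `L := B K`, `sᵢ := Σₖ L_{k,i}²` and
`g(p₁,…,pₙ) := ‖Dᵀ D + Diag(−s₁ + s₁/p₁, …, −sₙ + sₙ/pₙ)‖₂`, one has
`E[‖x(k+1)‖²] ≤ g(p₁,…,pₙ) · E[‖x(k)‖²]` for every `k`. -/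
theorem expected_square_norm_decay_adaptive
    {n m : ℕ} (A : Matrix (Fin n) (Fin n) ℝ) (B : Matrix (Fin n) (Fin m) ℝ)
    (K : Matrix (Fin m) (Fin n) ℝ)
    {Ω : Type*} [MeasurableSpace Ω] (μ : Measure Ω) [IsProbabilityMeasure μ]
    (p : Fin n → ℝ) (hp : ∀ i, p i ∈ Set.Ioc (0 : ℝ) 1)
    (c : ℕ → Fin n → Ω → ℝ)
    (hmeas : ∀ k i, Measurable (c k i))
    (h01 : ∀ k i ω, c k i ω = 0 ∨ c k i ω = 1)
    (hber : ∀ k i, μ {ω | c k i ω = 1} = ENNReal.ofReal (p i))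
    (hindep : iIndepFun (β := fun _ : ℕ × Fin n => ℝ)
      (fun ki ω => c ki.1 ki.2 ω) μ)
    (x₀ : Fin n → ℝ) (x : ℕ → Ω → Fin n → ℝ)
    (hx0 : ∀ ω, x 0 ω = x₀)
    (hxrec : ∀ k ω, x (k + 1) ω =
      (A + B * K * Matrix.diagonal (fun i => c k i ω / p i)).mulVec (x k ω))
    (k : ℕ) :
    (∫ ω, ∑ i, (x (k + 1) ω i) ^ 2 ∂μ) ≤
      specNorm ((A + B * K)ᵀ * (A + B * K) + Matrix.diagonal
          (fun i => -(∑ j, ((B * K) j i) ^ 2) + (∑ j, ((B * K) j i) ^ 2) / p i)) *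
        (∫ ω, ∑ i, (x k ω i) ^ 2 ∂μ) := by
  classical
  have hp0 : ∀ i, 0 < p i := fun i => (hp i).1
  set DM : Matrix (Fin n) (Fin n) ℝ := A + B * K with hDM
  set LM : Matrix (Fin n) (Fin n) ℝ := B * K with hLM
  set M : Matrix (Fin n) (Fin n) ℝ := DMᵀ * DM + Matrix.diagonal
      (fun i => -(∑ j, (LM j i) ^ 2) + (∑ j, (LM j i) ^ 2) / p i) with hM
  set ξ : Fin n → Ω → ℝ := fun j ω => c k j ω / p j - 1 with hξ
  -- basic bounds on c
  have hc01 : ∀ l i ω, 0 ≤ c l i ω ∧ c l i ω ≤ 1 := by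
    intro l i ω; rcases h01 l i ω with h | h <;> rw [h] <;> norm_num
  have hcabs : ∀ l i ω, |c l i ω| ≤ 1 := by
    intro l i ω; rw [abs_le]; exact ⟨by linarith [(hc01 l i ω).1], (hc01 l i ω).2⟩
  have hcp : ∀ l i ω, |c l i ω / p i| ≤ 1 / p i := by
    intro l i ω
    rw [abs_div, abs_of_pos (hp0 i)]
    exact div_le_div_of_nonneg_right (hcabs l i ω) (hp0 i).le
  have hξb : ∀ j ω, |ξ j ω| ≤ 1 / p j + 1 := by
    intro j ω
    calc |c k j ω / p j - 1| ≤ |c k j ω / p j| + |(1:ℝ)| := abs_sub _ _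
      _ ≤ 1 / p j + 1 := by have := hcp k j ω; rw [abs_one]; linarith
  have hξm : ∀ j, Measurable (ξ j) := fun j => ((hmeas k j).div_const (p j)).sub measurable_const
  -- integrability from boundedness
  have hbd : ∀ (f : Ω → ℝ) (C : ℝ), Measurable f → (∀ ω, |f ω| ≤ C) → Integrable f μ := by
    intro f C hf hC
    exact (integrable_const C).mono' hf.aestronglyMeasurable
      (ae_of_all _ fun ω => by simpa [Real.norm_eq_abs] using hC ω)
  -- representation of x l as measurable function of past c's
  have hGargs : ∀ l : ℕ, ∃ G : ((↑(Finset.range l ×ˢ (Finset.univ : Finset (Fin n)))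
        : Finset (ℕ × Fin n)) → ℝ) → (Fin n → ℝ),
      Measurable G ∧ ∀ ω, x l ω = G (fun i => c i.1.1 i.1.2 ω) := by
    intro l
    induction l with
    | zero => exact ⟨fun _ => x₀, measurable_const, fun ω => hx0 ω⟩
    | succ l ih =>
      obtain ⟨G, hGm, hGx⟩ := ih
      have hmem1 : ∀ i : Fin n, ((l, i) : ℕ × Fin n) ∈ Finset.range (l+1) ×ˢ Finset.univ :=
        fun i => Finset.mem_product.2 ⟨Finset.mem_range.2 (Nat.lt_succ_self l), Finset.mem_univ i⟩
      have hmem2 : ∀ i : (↑(Finset.range l ×ˢ (Finset.univ : Finset (Fin n))) : Finset (ℕ × Fin n)),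
          (i : ℕ × Fin n) ∈ Finset.range (l+1) ×ˢ (Finset.univ : Finset (Fin n)) := by
        intro i
        have h := Finset.mem_product.1 i.2
        exact Finset.mem_product.2 ⟨Finset.mem_range.2 (Nat.lt_succ_of_lt (Finset.mem_range.1 h.1)),
          Finset.mem_univ _⟩
      refine ⟨fun v => (A + LM * Matrix.diagonal (fun i => v ⟨(l, i), hmem1 i⟩ / p i)).mulVec
        (G (fun i => v ⟨(i : ℕ × Fin n), hmem2 i⟩)), ?_, ?_⟩
      · apply measurable_pi_lambda
        intro j
        simp only [Matrix.mulVec, dotProduct, Matrix.add_apply, Matrix.mul_diagonal]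
        apply Finset.measurable_sum
        intro j' _
        have hres : Measurable fun (v : (↑(Finset.range (l+1) ×ˢ (Finset.univ : Finset (Fin n)))
            : Finset (ℕ × Fin n)) → ℝ) => G (fun i => v ⟨(i : ℕ × Fin n), hmem2 i⟩) :=
          hGm.comp (measurable_pi_lambda _ fun i => measurable_pi_apply _)
        exact ((measurable_const.add ((((measurable_pi_apply _).div_const _)).const_mul
          (LM j j'))).mul (hres.eval))
      · intro ω
        rw [hxrec l ω, hGx ω]
  obtain ⟨G, hGm, hGx⟩ := hGargs k
  have hxkm : Measurable (x k) := by
    have hx : x k = fun ω => G (fun i => c i.1.1 i.1.2 ω) := funext hGx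
    rw [hx]
    exact hGm.comp (measurable_pi_lambda _ fun i => hmeas i.1.1 i.1.2)
  have hym : ∀ j, Measurable fun ω => x k ω j := fun j => hxkm.eval
  -- boundedness of x l
  have hxb : ∀ l : ℕ, ∃ C : ℝ, 0 ≤ C ∧ ∀ ω j, |x l ω j| ≤ C := by
    intro l
    induction l with
    | zero =>
      refine ⟨∑ j, |x₀ j|, Finset.sum_nonneg fun j _ => abs_nonneg _, fun ω j => ?_⟩
      rw [hx0 ω]
      exact Finset.single_le_sum (fun j _ => abs_nonneg (x₀ j)) (Finset.mem_univ j)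
    | succ l ih =>
      obtain ⟨C, hC0, hC⟩ := ih
      refine ⟨(∑ i, ∑ j, (|A i j| + |LM i j| * (1 / p j))) * C, ?_, ?_⟩
      · apply mul_nonneg _ hC0
        apply Finset.sum_nonneg; intro i _; apply Finset.sum_nonneg; intro j _
        exact add_nonneg (abs_nonneg _) (mul_nonneg (abs_nonneg _) (one_div_pos.2 (hp0 j)).le)
      · intro ω j
        rw [hxrec l ω]
        have hent : ∀ j', |(A + LM * Matrix.diagonal (fun i => c l i ω / p i)) j j'|
            ≤ |A j j'| + |LM j j'| * (1 / p j') := by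
          intro j'
          rw [Matrix.add_apply, Matrix.mul_diagonal]
          calc |A j j' + LM j j' * (c l j' ω / p j')|
              ≤ |A j j'| + |LM j j' * (c l j' ω / p j')| := abs_add_le _ _
            _ ≤ |A j j'| + |LM j j'| * (1 / p j') := by
                rw [abs_mul]
                exact add_le_add (le_refl _) (mul_le_mul_of_nonneg_left (hcp l j' ω) (abs_nonneg _))
        calc |(A + LM * Matrix.diagonal fun i => c l i ω / p i).mulVec (x l ω) j|
            = |∑ j', (A + LM * Matrix.diagonal fun i => c l i ω / p i) j j' * x l ω j'| := by
              rw [Matrix.mulVec, dotProduct]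
          _ ≤ ∑ j', |(A + LM * Matrix.diagonal fun i => c l i ω / p i) j j' * x l ω j'| :=
              Finset.abs_sum_le_sum_abs _ _
          _ ≤ ∑ j', (|A j j'| + |LM j j'| * (1 / p j')) * C := by
              refine Finset.sum_le_sum fun j' _ => ?_
              rw [abs_mul]
              exact mul_le_mul (hent j') (hC ω j') (abs_nonneg _)
                (add_nonneg (abs_nonneg _) (mul_nonneg (abs_nonneg _) (one_div_pos.2 (hp0 j')).le))
          _ = (∑ j', (|A j j'| + |LM j j'| * (1 / p j'))) * C := (Finset.sum_mul _ _ _).symm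
          _ ≤ (∑ i, ∑ j', (|A i j'| + |LM i j'| * (1 / p j'))) * C := by
              refine mul_le_mul_of_nonneg_right ?_ hC0
              refine Finset.single_le_sum
                (f := fun i => ∑ j', (|A i j'| + |LM i j'| * (1 / p j'))) (fun i _ => ?_)
                (Finset.mem_univ j)
              apply Finset.sum_nonneg; intro j'' _
              exact add_nonneg (abs_nonneg _) (mul_nonneg (abs_nonneg _) (one_div_pos.2 (hp0 j'')).le)
  obtain ⟨C, hC0, hCb⟩ := hxb k
  -- integrable building blocks
  have habs_mul : ∀ (a b Ca Cb : ℝ), |a| ≤ Ca → |b| ≤ Cb → |a * b| ≤ Ca * Cb := by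
    intro a b Ca Cb h1 h2
    rw [abs_mul]
    exact mul_le_mul h1 h2 (abs_nonneg _) ((abs_nonneg a).trans h1)
  have hyyb : ∀ j j' ω, |x k ω j * x k ω j'| ≤ C * C :=
    fun j j' ω => habs_mul _ _ _ _ (hCb ω j) (hCb ω j')
  have hyym : ∀ j j', Measurable fun ω => x k ω j * x k ω j' :=
    fun j j' => (hym j).mul (hym j')
  have hyy_int : ∀ j j', Integrable (fun ω => x k ω j * x k ω j') μ :=
    fun j j' => hbd _ (C * C) (hyym j j') (hyyb j j')
  have hξyy_int : ∀ j₀ j j', Integrable (fun ω => ξ j₀ ω * (x k ω j * x k ω j')) μ :=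
    fun j₀ j j' => hbd _ ((1 / p j₀ + 1) * (C * C)) ((hξm j₀).mul (hyym j j'))
      (fun ω => habs_mul _ _ _ _ (hξb j₀ ω) (hyyb j j' ω))
  have hξξyy_int : ∀ j₀ j₁ j j',
      Integrable (fun ω => (ξ j₀ ω * ξ j₁ ω) * (x k ω j * x k ω j')) μ :=
    fun j₀ j₁ j j' => hbd _ (((1 / p j₀ + 1) * (1 / p j₁ + 1)) * (C * C))
      (((hξm j₀).mul (hξm j₁)).mul (hyym j j'))
      (fun ω => habs_mul _ _ _ _ (habs_mul _ _ _ _ (hξb j₀ ω) (hξb j₁ ω)) (hyyb j j' ω))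
  have hc_int : ∀ j, Integrable (c k j) μ := fun j => hbd _ 1 (hmeas k j) (hcabs k j)
  -- moments
  have hIc : ∀ j, ∫ ω, c k j ω ∂μ = p j := by
    intro j
    have hsm : MeasurableSet {ω | c k j ω = 1} := hmeas k j (measurableSet_singleton 1)
    have hfun : c k j = Set.indicator {ω | c k j ω = 1} (fun _ => (1:ℝ)) := by
      funext ω
      rcases h01 k j ω with h | h <;>
        simp [Set.indicator_apply, Set.mem_setOf_eq, h]
    rw [hfun, integral_indicator_const (1:ℝ) hsm, measureReal_def, hber k j, smul_eq_mul, mul_one,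
      ENNReal.toReal_ofReal (hp0 j).le]
  have hIξ : ∀ j, ∫ ω, ξ j ω ∂μ = 0 := by
    intro j
    show ∫ ω, (c k j ω / p j - 1) ∂μ = 0
    rw [integral_sub (hbd _ (1 / p j) ((hmeas k j).div_const _) (hcp k j)) (integrable_const 1),
      integral_div, hIc j, integral_const]
    simp [div_self (hp0 j).ne']
  have hIξξ : ∀ j, ∫ ω, ξ j ω * ξ j ω ∂μ = 1 / p j - 1 := by
    intro j
    have hptw : ∀ ω, ξ j ω * ξ j ω = (1 / (p j)^2 - 2 / p j) * c k j ω + 1 := by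
      intro ω
      show (c k j ω / p j - 1) * (c k j ω / p j - 1) = _
      rcases h01 k j ω with h | h <;> rw [h] <;> ring
    simp_rw [hptw]
    rw [integral_add ((hc_int j).const_mul _) (integrable_const 1), integral_const_mul,
      hIc j, integral_const, probReal_univ]
    have hpj := (hp0 j).ne'
    field_simp
    ring
  -- independence
  have hmemS : ∀ j : Fin n, ((k, j) : ℕ × Fin n) ∈ ({k} ×ˢ Finset.univ : Finset (ℕ × Fin n)) :=
    fun j => Finset.mem_product.2 ⟨Finset.mem_singleton_self k, Finset.mem_univ j⟩
  have hST : Disjoint ({k} ×ˢ Finset.univ : Finset (ℕ × Fin n))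
      (Finset.range k ×ˢ Finset.univ) := by
    rw [Finset.disjoint_left]
    rintro ⟨a, b⟩ hS hT
    have h1 := (Finset.mem_product.1 hS).1
    have h2 := (Finset.mem_product.1 hT).1
    rw [Finset.mem_singleton] at h1
    rw [Finset.mem_range] at h2
    omega
  have hbase := hindep.indepFun_finset ({k} ×ˢ Finset.univ) (Finset.range k ×ˢ Finset.univ) hST
    (fun ki => hmeas ki.1 ki.2)
  have key : ∀ (f : ((↑({k} ×ˢ Finset.univ : Finset (ℕ × Fin n))) → ℝ) → ℝ), Measurable f →
      ∀ (g : (Fin n → ℝ) → ℝ), Measurable g →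
      IndepFun (fun ω => f (fun i => c i.1.1 i.1.2 ω)) (fun ω => g (x k ω)) μ := by
    intro f hf g hg
    have h2 := hbase.comp hf (hg.comp hGm)
    have h3 : (fun ω => g (x k ω))
        = (g ∘ G) ∘ (fun ω (i : (↑(Finset.range k ×ˢ (Finset.univ : Finset (Fin n)))
            : Finset (ℕ × Fin n))) => c i.1.1 i.1.2 ω) := by
      funext ω
      simp only [Function.comp_apply]
      rw [hGx ω]
    rw [h3]
    exact h2
  -- splitting integrals via independence
  have hsplit1 : ∀ j₀ j j', ∫ ω, ξ j₀ ω * (x k ω j * x k ω j') ∂μ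
      = (∫ ω, ξ j₀ ω ∂μ) * ∫ ω, x k ω j * x k ω j' ∂μ := by
    intro j₀ j j'
    have hf : Measurable fun v : (↑({k} ×ˢ Finset.univ : Finset (ℕ × Fin n))) → ℝ =>
        v ⟨(k, j₀), hmemS j₀⟩ / p j₀ - 1 :=
      ((measurable_pi_apply _).div_const _).sub measurable_const
    have hg : Measurable fun u : Fin n → ℝ => u j * u j' :=
      (measurable_pi_apply j).mul (measurable_pi_apply j')
    have hk := key _ hf _ hg
    exact hk.integral_mul_eq_mul_integral (hξm j₀).aestronglyMeasurable (hyym j j').aestronglyMeasurable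
  have hsplit2 : ∀ j₀ j₁ j j', ∫ ω, (ξ j₀ ω * ξ j₁ ω) * (x k ω j * x k ω j') ∂μ
      = (∫ ω, ξ j₀ ω * ξ j₁ ω ∂μ) * ∫ ω, x k ω j * x k ω j' ∂μ := by
    intro j₀ j₁ j j'
    have hf : Measurable fun v : (↑({k} ×ˢ Finset.univ : Finset (ℕ × Fin n))) → ℝ =>
        (v ⟨(k, j₀), hmemS j₀⟩ / p j₀ - 1) * (v ⟨(k, j₁), hmemS j₁⟩ / p j₁ - 1) :=
      (((measurable_pi_apply _).div_const _).sub measurable_const).mul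
        (((measurable_pi_apply _).div_const _).sub measurable_const)
    have hg : Measurable fun u : Fin n → ℝ => u j * u j' :=
      (measurable_pi_apply j).mul (measurable_pi_apply j')
    have hk := key _ hf _ hg
    exact hk.integral_mul_eq_mul_integral ((hξm j₀).mul (hξm j₁)).aestronglyMeasurable
      (hyym j j').aestronglyMeasurable
  have hξξ0 : ∀ j j', j ≠ j' → ∫ ω, ξ j ω * ξ j' ω ∂μ = 0 := by
    intro j j' hjj'
    have hij : ((k, j) : ℕ × Fin n) ≠ (k, j') := by simp [hjj']
    have hind2 : IndepFun (ξ j) (ξ j') μ := by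
      have := (hindep.indepFun hij).comp
        (φ := fun t : ℝ => t / p j - 1) (ψ := fun t : ℝ => t / p j' - 1)
        ((measurable_id.div_const _).sub measurable_const)
        ((measurable_id.div_const _).sub measurable_const)
      exact this
    have h := hind2.integral_mul_eq_mul_integral (hξm j).aestronglyMeasurable (hξm j').aestronglyMeasurable
    calc ∫ ω, ξ j ω * ξ j' ω ∂μ = (∫ ω, ξ j ω ∂μ) * ∫ ω, ξ j' ω ∂μ := h
      _ = 0 := by rw [hIξ j, hIξ j']; ring
  -- the per-pair coefficient of M
  have hMjj : ∀ j j', M j j' = (∑ i, DM i j * DM i j')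
      + (∑ i, LM i j * LM i j') * (if j = j' then 1 / p j - 1 else 0) := by
    intro j j'
    rw [hM]
    by_cases h : j = j'
    · subst h
      simp only [Matrix.add_apply, Matrix.mul_apply, Matrix.transpose_apply,
        Matrix.diagonal_apply_eq, if_true]
      simp_rw [pow_two]
      have hpj := (hp0 j).ne'
      field_simp
      ring
    · simp only [Matrix.add_apply, Matrix.mul_apply, Matrix.transpose_apply,
        Matrix.diagonal_apply_ne _ h, if_neg h, mul_zero, add_zero]
  -- pointwise expansion
  have stepA : ∀ ω, ∑ i, (x (k+1) ω i)^2
      = ∑ j, ∑ j', ((∑ i, DM i j * DM i j') * (x k ω j * x k ω j')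
          + (∑ i, DM i j * LM i j') * (ξ j' ω * (x k ω j * x k ω j'))
          + (∑ i, LM i j * DM i j') * (ξ j ω * (x k ω j * x k ω j'))
          + (∑ i, LM i j * LM i j') * ((ξ j ω * ξ j' ω) * (x k ω j * x k ω j'))) := by
    intro ω
    rw [hxrec k ω]
    have hent : ∀ i, ((A + LM * Matrix.diagonal fun i => c k i ω / p i).mulVec (x k ω)) i
        = ∑ j, (DM i j + LM i j * ξ j ω) * x k ω j := by
      intro i
      rw [Matrix.mulVec, dotProduct]
      refine Finset.sum_congr rfl fun j _ => ?_
      rw [Matrix.add_apply, Matrix.mul_diagonal, hDM, Matrix.add_apply]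
      show (A i j + LM i j * (c k j ω / p j)) * x k ω j
        = ((A i j + LM i j) + LM i j * (c k j ω / p j - 1)) * x k ω j
      ring
    simp_rw [hent]
    exact sum_sq_expand (fun i j => DM i j) (fun i j => LM i j) (fun j => ξ j ω) (x k ω)
  -- per-pair integrability
  have hterm_int : ∀ j j', Integrable (fun ω =>
      (∑ i, DM i j * DM i j') * (x k ω j * x k ω j')
        + (∑ i, DM i j * LM i j') * (ξ j' ω * (x k ω j * x k ω j'))
        + (∑ i, LM i j * DM i j') * (ξ j ω * (x k ω j * x k ω j'))
        + (∑ i, LM i j * LM i j') * ((ξ j ω * ξ j' ω) * (x k ω j * x k ω j'))) μ :=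
    fun j j' => ((((hyy_int j j').const_mul _).add ((hξyy_int j' j j').const_mul _)).add
      ((hξyy_int j j j').const_mul _)).add ((hξξyy_int j j' j j').const_mul _)
  -- per-pair integral value
  have hpp : ∀ j j', (∫ ω, ((∑ i, DM i j * DM i j') * (x k ω j * x k ω j')
        + (∑ i, DM i j * LM i j') * (ξ j' ω * (x k ω j * x k ω j'))
        + (∑ i, LM i j * DM i j') * (ξ j ω * (x k ω j * x k ω j'))
        + (∑ i, LM i j * LM i j') * ((ξ j ω * ξ j' ω) * (x k ω j * x k ω j'))) ∂μ)
      = M j j' * ∫ ω, x k ω j * x k ω j' ∂μ := by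
    intro j j'
    have h1 : Integrable (fun ω => (∑ i, DM i j * DM i j') * (x k ω j * x k ω j')) μ :=
      (hyy_int j j').const_mul _
    have h2 : Integrable
        (fun ω => (∑ i, DM i j * LM i j') * (ξ j' ω * (x k ω j * x k ω j'))) μ :=
      (hξyy_int j' j j').const_mul _
    have h3 : Integrable
        (fun ω => (∑ i, LM i j * DM i j') * (ξ j ω * (x k ω j * x k ω j'))) μ :=
      (hξyy_int j j j').const_mul _
    have h4 : Integrable
        (fun ω => (∑ i, LM i j * LM i j') * ((ξ j ω * ξ j' ω) * (x k ω j * x k ω j'))) μ :=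
      (hξξyy_int j j' j j').const_mul _
    have h12 : Integrable (fun ω => (∑ i, DM i j * DM i j') * (x k ω j * x k ω j')
        + (∑ i, DM i j * LM i j') * (ξ j' ω * (x k ω j * x k ω j'))) μ := h1.add h2
    have h123 : Integrable (fun ω => (∑ i, DM i j * DM i j') * (x k ω j * x k ω j')
        + (∑ i, DM i j * LM i j') * (ξ j' ω * (x k ω j * x k ω j'))
        + (∑ i, LM i j * DM i j') * (ξ j ω * (x k ω j * x k ω j'))) μ := h12.add h3
    rw [integral_add h123 h4, integral_add h12 h3, integral_add h1 h2,
      integral_const_mul, integral_const_mul, integral_const_mul, integral_const_mul,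
      hsplit1 j' j j', hsplit1 j j j', hsplit2 j j' j j', hIξ j, hIξ j', hMjj j j']
    by_cases h : j = j'
    · subst h
      rw [hIξξ j, if_pos rfl]
      ring
    · rw [hξξ0 j j' h, if_neg h]
      ring
  -- main computation
  have hq_int : Integrable (fun ω => ∑ j, ∑ j', M j j' * (x k ω j * x k ω j')) μ :=
    integrable_finset_sum _ fun j _ => integrable_finset_sum _ fun j' _ =>
      (hyy_int j j').const_mul _
  have hsq_int : Integrable (fun ω => ∑ j, (x k ω j)^2) μ :=
    integrable_finset_sum _ fun j _ => by simpa [pow_two] using hyy_int j j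
  calc (∫ ω, ∑ i, (x (k + 1) ω i) ^ 2 ∂μ)
      = ∫ ω, ∑ j, ∑ j', ((∑ i, DM i j * DM i j') * (x k ω j * x k ω j')
          + (∑ i, DM i j * LM i j') * (ξ j' ω * (x k ω j * x k ω j'))
          + (∑ i, LM i j * DM i j') * (ξ j ω * (x k ω j * x k ω j'))
          + (∑ i, LM i j * LM i j') * ((ξ j ω * ξ j' ω) * (x k ω j * x k ω j'))) ∂μ := by
        exact integral_congr_ae (ae_of_all _ fun ω => stepA ω)
    _ = ∑ j, ∑ j', (∫ ω, ((∑ i, DM i j * DM i j') * (x k ω j * x k ω j')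
          + (∑ i, DM i j * LM i j') * (ξ j' ω * (x k ω j * x k ω j'))
          + (∑ i, LM i j * DM i j') * (ξ j ω * (x k ω j * x k ω j'))
          + (∑ i, LM i j * LM i j') * ((ξ j ω * ξ j' ω) * (x k ω j * x k ω j'))) ∂μ) := by
        rw [integral_finset_sum _ fun j _ => integrable_finset_sum _ fun j' _ => hterm_int j j']
        exact Finset.sum_congr rfl fun j _ =>
          integral_finset_sum _ fun j' _ => hterm_int j j'
    _ = ∑ j, ∑ j', M j j' * ∫ ω, x k ω j * x k ω j' ∂μ :=
        Finset.sum_congr rfl fun j _ => Finset.sum_congr rfl fun j' _ => hpp j j'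
    _ = ∫ ω, ∑ j, ∑ j', M j j' * (x k ω j * x k ω j') ∂μ := by
        rw [integral_finset_sum (f := fun j ω => ∑ j', M j j' * (x k ω j * x k ω j')) _
          fun j _ => integrable_finset_sum _ fun j' _ => (hyy_int j j').const_mul _]
        refine Finset.sum_congr rfl fun j _ => ?_
        rw [integral_finset_sum (f := fun j' ω => M j j' * (x k ω j * x k ω j')) _
          fun j' _ => (hyy_int j j').const_mul _]
        exact Finset.sum_congr rfl fun j' _ => (integral_const_mul _ _).symm
    _ ≤ ∫ ω, specNorm M * ∑ j, (x k ω j)^2 ∂μ :=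
        integral_mono hq_int (hsq_int.const_mul _) fun ω => quad_bound_s13 M (x k ω)
    _ = specNorm M * ∫ ω, ∑ j, (x k ω j)^2 ∂μ := integral_const_mul _ _
end
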